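/- arXiv:1107.1015 — 4 statements merged into one kernel-verified Lean document; each statement's English description precedes it below -/
import Mathlib

section
/- Let M ≥ 0 and let A, B be N×N normal matrices with operator norms ‖A‖ ≤ M and ‖B‖ ≤ M. Then for all integers d ≥ 1 and g ≥ 0, |C_{g,d}(A,B)| ≤ M^{2d} · p(d)² · (d!)^{2g−2+2d}, where p(d) is the number of partitions of d. -/
open MeasureTheory Matrix

namespace HCIZ

noncomputable instance (N : ℕ) : MeasurableSpace (Matrix (Fin N) (Fin N) ℂ) := borel _

instance (N : ℕ) : BorelSpace (Matrix (Fin N) (Fin N) ℂ) := ⟨rfl⟩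

/-- The number of cycles of a permutation (fixed points counted as cycles). -/
def cycleCount {d : ℕ} (π : Equiv.Perm (Fin d)) : ℕ := π.partition.parts.card

/-- `π` has cycle type `α` (1-cycles included). -/
def HasCycleType {d : ℕ} (π : Equiv.Perm (Fin d)) (α : d.Partition) : Prop :=
  π.partition.parts = α.parts

/-- The tuple `τ` consists of transpositions `(s_i t_i)`, `s_i < t_i`, with
`t_1 ≤ t_2 ≤ ⋯` (monotone condition). -/
def IsMonotoneTuple {d r : ℕ} (τ : Fin r → Equiv.Perm (Fin d)) : Prop :=
  (∀ i, (τ i).IsSwap) ∧ Monotone fun i => (τ i).support.max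

/-- The subgroup generated by `s` acts transitively on `Fin d`. -/
def GeneratesTransitively {d : ℕ} (s : Set (Equiv.Perm (Fin d))) : Prop :=
  ∀ x y : Fin d, ∃ g ∈ Subgroup.closure s, g x = y

/-- `H⃗^r(α,β)`: the number of monotone transitive factorizations of the identity
into `ρ σ τ_1 ⋯ τ_r` with `ρ` of cycle type `α` and `σ` of cycle type `β`. -/
noncomputable def Hr (d : ℕ) (α β : d.Partition) (r : ℕ) : ℕ :=
  Nat.card {T : Equiv.Perm (Fin d) × Equiv.Perm (Fin d) × (Fin r → Equiv.Perm (Fin d)) //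
    HasCycleType T.1 α ∧ HasCycleType T.2.1 β ∧ IsMonotoneTuple T.2.2 ∧
    T.1 * T.2.1 * (List.ofFn T.2.2).prod = 1 ∧
    GeneratesTransitively ({T.1, T.2.1} ∪ Set.range T.2.2)}

/-- `H̃^r(α,β)`: the same count without the transitivity requirement. -/
noncomputable def Hnt (d : ℕ) (α β : d.Partition) (r : ℕ) : ℕ :=
  Nat.card {T : Equiv.Perm (Fin d) × Equiv.Perm (Fin d) × (Fin r → Equiv.Perm (Fin d)) //
    HasCycleType T.1 α ∧ HasCycleType T.2.1 β ∧ IsMonotoneTuple T.2.2 ∧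
    T.1 * T.2.1 * (List.ofFn T.2.2).prod = 1}

/-- The monotone double Hurwitz number `H⃗_g(α,β) = H⃗^r(α,β)`,
`r = 2g - 2 + ℓ(α) + ℓ(β)`. -/
noncomputable def Hg (d g : ℕ) (α β : d.Partition) : ℕ :=
  Hr d α β (2 * g + α.parts.card + β.parts.card - 2)

/-- `m_r(π)`: monotone (not necessarily transitive) factorizations of `π`
into `r` transpositions. -/
noncomputable def mcount (d r : ℕ) (π : Equiv.Perm (Fin d)) : ℕ :=
  Nat.card {τ : Fin r → Equiv.Perm (Fin d) //
    IsMonotoneTuple τ ∧ (List.ofFn τ).prod = π}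

/-- Power sum `p_α(A) = ∏ Tr(A^{α_i})`. -/
noncomputable def pPoly {N : ℕ} (A : Matrix (Fin N) (Fin N) ℂ) {d : ℕ} (α : d.Partition) : ℂ :=
  (α.parts.map fun k => (A ^ k).trace).prod

/-- `φ_α = ∏ φ_{α_i}`. -/
noncomputable def momProd (Φ : ℕ → ℂ) {d : ℕ} (α : d.Partition) : ℂ :=
  (α.parts.map Φ).prod

/-- `C_{g,d}(A,B) = ∑_{α,β ⊢ d} (-1)^{d+ℓ(α)+ℓ(β)} H⃗_g(α,β)
(N^{-ℓ(α)} p_α(A)) (N^{-ℓ(β)} p_β(B))`. -/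
noncomputable def Cmat {N : ℕ} (g d : ℕ) (A B : Matrix (Fin N) (Fin N) ℂ) : ℂ :=
  ∑ α : d.Partition, ∑ β : d.Partition,
    (-1 : ℂ) ^ (d + α.parts.card + β.parts.card) * (Hg d g α β : ℂ) *
      (((N : ℂ) ^ α.parts.card)⁻¹ * pPoly A α) * (((N : ℂ) ^ β.parts.card)⁻¹ * pPoly B β)

/-- `C_{g,d}(Φ,Ψ) = ∑_{α,β ⊢ d} (-1)^{d+ℓ(α)+ℓ(β)} H⃗_g(α,β) φ_α ψ_β`. -/
noncomputable def Cseq (g d : ℕ) (Φ Ψ : ℕ → ℂ) : ℂ :=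
  ∑ α : d.Partition, ∑ β : d.Partition,
    (-1 : ℂ) ^ (d + α.parts.card + β.parts.card) * (Hg d g α β : ℂ) *
      momProd Φ α * momProd Ψ β

/-- The HCIZ integral `I_N(z;A,B)` with respect to a measure `μ` on `U(N)`. -/
noncomputable def hciz {N : ℕ} (μ : Measure (Matrix.unitaryGroup (Fin N) ℂ))
    (A B : Matrix (Fin N) (Fin N) ℂ) (z : ℂ) : ℂ :=
  ∫ U : Matrix.unitaryGroup (Fin N) ℂ,
    Complex.exp (-(z * (N : ℂ) *
      (A * (U : Matrix (Fin N) (Fin N) ℂ) * B *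
        ((U⁻¹ : Matrix.unitaryGroup (Fin N) ℂ) : Matrix (Fin N) (Fin N) ℂ)).trace)) ∂μ

/-- A free-energy branch for `I_N(·;A,B)` on the disc `D(0,ε)`: a holomorphic
function `F` with `F 0 = 0` and `exp (N² F z) = I_N(z;A,B)` on the disc. -/
def IsFreeEnergyBranch {N : ℕ} (μ : Measure (Matrix.unitaryGroup (Fin N) ℂ))
    (A B : Matrix (Fin N) (Fin N) ℂ) (ε : ℝ) (F : ℂ → ℂ) : Prop :=
  DifferentiableOn ℂ F (Metric.ball 0 ε) ∧ F 0 = 0 ∧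
    ∀ z ∈ Metric.ball (0 : ℂ) ε, Complex.exp ((N : ℂ) ^ 2 * F z) = hciz μ A B z

/-- The L² operator norm of a matrix. -/
noncomputable def opNorm {N : ℕ} (A : Matrix (Fin N) (Fin N) ℂ) : ℝ :=
  ‖Matrix.toEuclideanCLM (𝕜 := ℂ) A‖

/-- The all-ones partition `(1^d)`. -/
def onesPartition (d : ℕ) : d.Partition :=
  ⟨Multiset.replicate d 1, fun {i} hi => by
    rw [Multiset.eq_of_mem_replicate hi]; exact one_pos, by simp⟩

/-- The partition `(2,1^{d-2})` of `d`, for `d ≥ 2`. -/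
def twoOnesPartition (d : ℕ) (hd : 2 ≤ d) : d.Partition :=
  ⟨2 ::ₘ Multiset.replicate (d - 2) 1, fun {i} hi => by
    rcases Multiset.mem_cons.mp hi with h | h
    · omega
    · rw [Multiset.eq_of_mem_replicate h]; exact one_pos, by
    simp [Multiset.sum_cons]; omega⟩



section AuxLemmas

lemma entry_le_opNorm {N : ℕ} (C : Matrix (Fin N) (Fin N) ℂ) (i j : Fin N) :
    ‖C i j‖ ≤ opNorm C := by
  set T := Matrix.toEuclideanCLM (𝕜 := ℂ) C with hT
  set x : EuclideanSpace ℂ (Fin N) := EuclideanSpace.single j 1 with hx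
  have hxn : ‖x‖ = 1 := by simp [hx, EuclideanSpace.norm_single]
  have h1 : (T x) i = C i j := by
    rw [hT, hx, ← EuclideanSpace.toLp_single, Matrix.toEuclideanCLM_toLp]
    show Matrix.toLin' C (Pi.single j 1) i = C i j
    rw [Matrix.toLin'_apply, Matrix.mulVec_single_one]
    rfl
  have h2 : ‖(T x) i‖ ≤ ‖T x‖ := by
    have := norm_inner_le_norm (𝕜 := ℂ) (EuclideanSpace.single i (1:ℂ)) (T x)
    rwa [EuclideanSpace.inner_single_left, RingHom.map_one, one_mul,
      EuclideanSpace.norm_single, norm_one, one_mul] at this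
  calc ‖C i j‖ = ‖(T x) i‖ := by rw [h1]
    _ ≤ ‖T x‖ := h2
    _ ≤ ‖T‖ * ‖x‖ := T.le_opNorm x
    _ = opNorm C := by rw [hxn, mul_one, hT, opNorm]

lemma trace_pow_le {N : ℕ} (A : Matrix (Fin N) (Fin N) ℂ) (M : ℝ)
    (hA : opNorm A ≤ M) (k : ℕ) (hk : 1 ≤ k) :
    ‖(A ^ k).trace‖ ≤ (N : ℝ) * M ^ k := by
  have hop : opNorm (A ^ k) ≤ M ^ k := by
    have h1 : opNorm (A ^ k) = ‖(Matrix.toEuclideanCLM (𝕜 := ℂ) A) ^ k‖ := by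
      rw [opNorm, map_pow]
    rw [h1]
    calc ‖(Matrix.toEuclideanCLM (𝕜 := ℂ) A) ^ k‖
        ≤ ‖Matrix.toEuclideanCLM (𝕜 := ℂ) A‖ ^ k := norm_pow_le' _ hk
      _ ≤ M ^ k := pow_le_pow_left₀ (norm_nonneg _) hA k
  calc ‖(A ^ k).trace‖ ≤ ∑ i : Fin N, ‖(A ^ k) i i‖ := norm_sum_le _ _
    _ ≤ ∑ _i : Fin N, M ^ k := by
        refine Finset.sum_le_sum fun i _ => ?_
        exact le_trans (entry_le_opNorm _ i i) hop
    _ = (N : ℝ) * M ^ k := by simp [mul_comm]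

lemma parts_card_le {d : ℕ} (α : d.Partition) : α.parts.card ≤ d := by
  have h := Multiset.card_nsmul_le_sum (s := α.parts) (a := 1) (fun x hx => α.parts_pos hx)
  simpa [α.parts_sum] using h

lemma one_le_parts_card {d : ℕ} (hd : 1 ≤ d) (α : d.Partition) : 1 ≤ α.parts.card := by
  by_contra h
  have : α.parts = 0 := by
    rw [← Multiset.card_eq_zero]; omega
  have hs := α.parts_sum
  rw [this] at hs
  simp at hs
  omega

lemma eq_one_of_partition_card {d : ℕ} (π : Equiv.Perm (Fin d))
    (h : π.partition.parts.card = d) : π = 1 := by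
  have hp : π.partition.parts = π.cycleType + Multiset.replicate (d - π.support.card) 1 := by
    have := Equiv.Perm.parts_partition (σ := π)
    simpa [Fintype.card_fin] using this
  have hsum : π.cycleType.sum = π.support.card := Equiv.Perm.sum_cycleType π
  have hsupp : π.support.card ≤ d := by
    simpa [Fintype.card_fin] using Finset.card_le_univ π.support
  have h2 : 2 * Multiset.card π.cycleType ≤ π.cycleType.sum := by
    have := Multiset.card_nsmul_le_sum (s := π.cycleType) (a := 2)
      (fun x hx => Equiv.Perm.two_le_of_mem_cycleType hx)
    simpa [mul_comm, smul_eq_mul] using this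
  have hcard : Multiset.card π.cycleType + (d - π.support.card) = d := by
    rw [hp] at h
    simpa using h
  have : Multiset.card π.cycleType = 0 := by omega
  exact Equiv.Perm.card_cycleType_eq_zero.mp this

lemma Hr_le (d : ℕ) (α β : d.Partition) (r : ℕ) :
    Hr d α β r ≤ (d.factorial) ^ (r + 1) := by
  rw [Hr]
  refine le_trans (Nat.card_le_card_of_injective
    (fun T => (T.1.1, T.1.2.2) : _ → Equiv.Perm (Fin d) × (Fin r → Equiv.Perm (Fin d))) ?_) ?_
  · rintro ⟨⟨ρ, σ, τ⟩, h⟩ ⟨⟨ρ', σ', τ'⟩, h'⟩ heq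
    simp only [Prod.mk.injEq] at heq
    obtain ⟨h1, h2⟩ := heq
    subst h1; subst h2
    have e1 : ρ * σ * (List.ofFn τ).prod = 1 := h.2.2.2.1
    have e2 : ρ * σ' * (List.ofFn τ).prod = 1 := h'.2.2.2.1
    have : σ = σ' := by
      have := e1.trans e2.symm
      exact mul_left_cancel (mul_right_cancel this)
    simp [this]
  · rw [Nat.card_eq_fintype_card, Fintype.card_prod, Fintype.card_fun,
      Fintype.card_perm, Fintype.card_fin, Fintype.card_fin, pow_succ, mul_comm]

lemma Hr_le_ones (d : ℕ) (α β : d.Partition) (r : ℕ)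
    (hα : α.parts.card = d) (hβ : β.parts.card = d) :
    Hr d α β r ≤ (d.factorial) ^ r := by
  rw [Hr]
  refine le_trans (Nat.card_le_card_of_injective
    (fun T => T.1.2.2 : _ → (Fin r → Equiv.Perm (Fin d))) ?_) ?_
  · rintro ⟨⟨ρ, σ, τ⟩, h⟩ ⟨⟨ρ', σ', τ'⟩, h'⟩ heq
    simp only at heq
    subst heq
    have hρ : ρ = 1 := eq_one_of_partition_card ρ (by rw [h.1, hα])
    have hρ' : ρ' = 1 := eq_one_of_partition_card ρ' (by rw [h'.1, hα])
    have hσ : σ = 1 := eq_one_of_partition_card σ (by rw [h.2.1, hβ])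
    have hσ' : σ' = 1 := eq_one_of_partition_card σ' (by rw [h'.2.1, hβ])
    simp [hρ, hρ', hσ, hσ']
  · rw [Nat.card_eq_fintype_card, Fintype.card_fun, Fintype.card_perm,
      Fintype.card_fin, Fintype.card_fin]

lemma Hg_le (d g : ℕ) (hd : 1 ≤ d) (α β : d.Partition) :
    Hg d g α β ≤ d.factorial ^ (2 * g + 2 * d - 2) := by
  have hα1 := one_le_parts_card hd α
  have hβ1 := one_le_parts_card hd β
  have hαd := parts_card_le α
  have hβd := parts_card_le β
  have hfac : 1 ≤ d.factorial := Nat.one_le_iff_ne_zero.mpr (Nat.factorial_ne_zero d)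
  rcases eq_or_lt_of_le (Nat.add_le_add hαd hβd) with h | h
  · have hα : α.parts.card = d := by omega
    have hβ : β.parts.card = d := by omega
    have := Hr_le_ones d α β (2 * g + α.parts.card + β.parts.card - 2) hα hβ
    calc Hg d g α β ≤ d.factorial ^ (2 * g + α.parts.card + β.parts.card - 2) := this
      _ = d.factorial ^ (2 * g + 2 * d - 2) := by rw [hα, hβ]; ring_nf
  · have := Hr_le d α β (2 * g + α.parts.card + β.parts.card - 2)
    calc Hg d g α β ≤ d.factorial ^ (2 * g + α.parts.card + β.parts.card - 2 + 1) := this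
      _ ≤ d.factorial ^ (2 * g + 2 * d - 2) := Nat.pow_le_pow_right hfac (by omega)

lemma norm_prod_map_le {s : Multiset ℕ} (f : ℕ → ℂ) (c : ℕ → ℝ)
    (h : ∀ k ∈ s, ‖f k‖ ≤ c k) :
    ‖(s.map f).prod‖ ≤ (s.map c).prod := by
  induction s using Multiset.induction_on with
  | empty => simp
  | cons a s ih =>
    simp only [Multiset.map_cons, Multiset.prod_cons, norm_mul]
    have ha := h a (Multiset.mem_cons_self a s)
    have hs := ih (fun k hk => h k (Multiset.mem_cons_of_mem hk))
    exact mul_le_mul ha hs (norm_nonneg _) ((norm_nonneg (f a)).trans ha)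

lemma prod_map_const_mul_pow (s : Multiset ℕ) (c M : ℝ) :
    (s.map fun k => c * M ^ k).prod = c ^ s.card * M ^ s.sum := by
  induction s using Multiset.induction_on with
  | empty => simp
  | cons a s ih => simp [ih, pow_add, pow_succ]; ring

lemma pPoly_le {N : ℕ} (A : Matrix (Fin N) (Fin N) ℂ) (M : ℝ)
    (hA : opNorm A ≤ M) {d : ℕ} (α : d.Partition) :
    ‖pPoly A α‖ ≤ (N : ℝ) ^ α.parts.card * M ^ d := by
  have h := norm_prod_map_le (s := α.parts) (fun k => (A ^ k).trace)
    (fun k => (N : ℝ) * M ^ k)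
    (fun k hk => trace_pow_le A M hA k (α.parts_pos hk))
  rw [prod_map_const_mul_pow, α.parts_sum] at h
  exact h

lemma inv_mul_norm_le {N : ℕ} (A : Matrix (Fin N) (Fin N) ℂ) (M : ℝ) (hM : 0 ≤ M)
    (hA : opNorm A ≤ M) {d : ℕ} (α : d.Partition) :
    ‖((N : ℂ) ^ α.parts.card)⁻¹ * pPoly A α‖ ≤ M ^ d := by
  rw [norm_mul, norm_inv, norm_pow, Complex.norm_natCast]
  set a : ℝ := (N : ℝ) ^ α.parts.card with ha
  have ha0 : 0 ≤ a := pow_nonneg (Nat.cast_nonneg N) _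
  have hp := pPoly_le A M hA α
  rw [← ha] at hp
  rcases eq_or_lt_of_le ha0 with h0 | h0
  · have hz : ‖pPoly A α‖ = 0 := le_antisymm (by rw [← h0] at hp; simpa using hp) (norm_nonneg _)
    rw [hz, mul_zero]
    positivity
  · have h2 := mul_le_mul_of_nonneg_left hp (inv_nonneg.mpr ha0)
    rwa [inv_mul_cancel_left₀ (ne_of_gt h0)] at h2

end AuxLemmas

/-- Uniform bound: `|C_{g,d}(A,B)| ≤ M^{2d} p(d)² (d!)^{2g-2+2d}` for normal
matrices of operator norm at most `M`. -/
theorem Cgd_bound (N : ℕ) (M : ℝ) (hM : 0 ≤ M)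
    (A B : Matrix (Fin N) (Fin N) ℂ)
    (hA : IsStarNormal A) (hB : IsStarNormal B)
    (hAbd : opNorm A ≤ M) (hBbd : opNorm B ≤ M)
    (d g : ℕ) (hd : 1 ≤ d) :
    ‖Cmat g d A B‖ ≤
      M ^ (2 * d) * (Fintype.card (Nat.Partition d) : ℝ) ^ 2 *
        (d.factorial : ℝ) ^ (2 * g + 2 * d - 2) := by
  have hfac : (0:ℝ) ≤ (d.factorial : ℝ) ^ (2 * g + 2 * d - 2) := by positivity
  have hMd : (0:ℝ) ≤ M ^ d := pow_nonneg hM d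
  have key : ∀ α β : d.Partition,
      ‖(-1 : ℂ) ^ (d + α.parts.card + β.parts.card) * (Hg d g α β : ℂ) *
        (((N : ℂ) ^ α.parts.card)⁻¹ * pPoly A α) * (((N : ℂ) ^ β.parts.card)⁻¹ * pPoly B β)‖ ≤
      M ^ d * M ^ d * (d.factorial : ℝ) ^ (2 * g + 2 * d - 2) := by
    intro α β
    rw [norm_mul, norm_mul, norm_mul, norm_pow, norm_neg, norm_one, one_pow, one_mul,
      Complex.norm_natCast]
    have h1 : (Hg d g α β : ℝ) ≤ (d.factorial : ℝ) ^ (2 * g + 2 * d - 2) := by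
      have := Hg_le d g hd α β
      exact_mod_cast this
    have h2 := inv_mul_norm_le A M hM hAbd α
    have h3 := inv_mul_norm_le B M hM hBbd β
    calc (Hg d g α β : ℝ) * ‖((N : ℂ) ^ α.parts.card)⁻¹ * pPoly A α‖ *
          ‖((N : ℂ) ^ β.parts.card)⁻¹ * pPoly B β‖
        ≤ ((d.factorial : ℝ) ^ (2 * g + 2 * d - 2)) * (M ^ d) * (M ^ d) := by
          apply mul_le_mul
          · exact mul_le_mul h1 h2 (norm_nonneg _) hfac
          · exact h3
          · exact norm_nonneg _
          · exact mul_nonneg hfac hMd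
      _ = M ^ d * M ^ d * (d.factorial : ℝ) ^ (2 * g + 2 * d - 2) := by ring
  calc ‖Cmat g d A B‖
      ≤ ∑ α : d.Partition, ‖∑ β : d.Partition,
          (-1 : ℂ) ^ (d + α.parts.card + β.parts.card) * (Hg d g α β : ℂ) *
          (((N : ℂ) ^ α.parts.card)⁻¹ * pPoly A α) *
          (((N : ℂ) ^ β.parts.card)⁻¹ * pPoly B β)‖ := norm_sum_le _ _
    _ ≤ ∑ _α : d.Partition, ∑ _β : d.Partition,
          M ^ d * M ^ d * (d.factorial : ℝ) ^ (2 * g + 2 * d - 2) := by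
        refine Finset.sum_le_sum fun α _ => ?_
        refine le_trans (norm_sum_le _ _) ?_
        exact Finset.sum_le_sum fun β _ => key α β
    _ = (Fintype.card (Nat.Partition d) : ℝ) * ((Fintype.card (Nat.Partition d) : ℝ) *
          (M ^ d * M ^ d * (d.factorial : ℝ) ^ (2 * g + 2 * d - 2))) := by
        simp [Finset.sum_const, Finset.card_univ, mul_assoc]
    _ = M ^ (2 * d) * (Fintype.card (Nat.Partition d) : ℝ) ^ 2 *
          (d.factorial : ℝ) ^ (2 * g + 2 * d - 2) := by
        have hM2 : M ^ (2 * d) = M ^ d * M ^ d := by rw [two_mul, pow_add]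
        rw [hM2]
        ring


end HCIZ
end

section
/- Let d and N be integers with 1 ≤ d ≤ N. The d!×d! complex matrix G, with rows and columns indexed by the permutations of {1,…,d} and entries G_{ρσ} = N^{c(ρ⁻¹σ)}, where c(π) denotes the number of cycles of π, is invertible, and its inverse has entries (G⁻¹)_{ρσ} = Σ_{r=0}^∞ (−1)^r N^{−d−r} m_r(ρ⁻¹σ), the series converging absolutely, where m_r(π) is the number of r-tuples (τ_1,…,τ_r) of transpositions of {1,…,d} such that τ_1⋯τ_r = π and, writing τ_i = (s_i t_i) with s_i < t_i, one has t_1 ≤ ⋯ ≤ t_r. -/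
open MeasureTheory Matrix

namespace HCIZ

/-- The Gram matrix `G_{ρσ} = N^{c(ρ⁻¹σ)}` on `S(d)`. -/
noncomputable def gramMatrix (d N : ℕ) :
    Matrix (Equiv.Perm (Fin d)) (Equiv.Perm (Fin d)) ℂ :=
  Matrix.of fun ρ σ => (N : ℂ) ^ cycleCount (ρ⁻¹ * σ)

namespace HCIZW

open Equiv Equiv.Perm Finset

variable {β : Type*} [DecidableEq β] [Fintype β]

/-- Extending a cycle by one point via a transposition. -/
lemma isCycle_swap_mul_extend {c : Equiv.Perm β} {x y : β}
    (hc : c.IsCycle) (hx : x ∈ c.support) (hy : y ∉ c.support) (hxy : x ≠ y) :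
    (Equiv.swap x y * c).IsCycle ∧
      (Equiv.swap x y * c).support = insert y c.support := by
  have hcx : c x ≠ x := mem_support.1 hx
  have hcy : c y = y := notMem_support.1 hy
  set σ := Equiv.swap x y * c with hσ
  have hσy : σ y = x := by
    simp [hσ, Equiv.Perm.mul_apply, hcy]
  have key : ∀ n : ℕ, σ.SameCycle y ((c ^ n) x) := by
    intro n
    induction n with
    | zero => exact ⟨1, by simp [hσy]⟩
    | succ n ih =>
      by_cases h : (c ^ (n + 1)) x = x
      · rw [h]; exact ⟨1, by simp [hσy]⟩
      · have hyfix : (c ^ (n + 1)) y = y :=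
          Equiv.Perm.pow_apply_eq_self_of_apply_eq_self hcy (n + 1)
        have hne_y : (c ^ (n + 1)) x ≠ y := by
          intro hxy'
          exact hxy (by simpa [hxy'] using ((c ^ (n+1)).injective (hxy'.trans hyfix.symm)))
        have hstep : σ ((c ^ n) x) = (c ^ (n + 1)) x := by
          have hcc : c ((c ^ n) x) = (c ^ (n + 1)) x := by
            rw [pow_succ']; rfl
          simp only [hσ, Equiv.Perm.mul_apply, hcc]
          exact Equiv.swap_apply_of_ne_of_ne h hne_y
        exact ih.trans ⟨1, by simpa using hstep⟩
  have hsupp_le : σ.support ⊆ (Equiv.swap x y).support ∪ c.support :=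
    Equiv.Perm.support_mul_le _ _
  have hyx : σ.SameCycle y x := by simpa using key 0
  have hmain : σ.IsCycle := by
    refine ⟨y, by rw [hσy]; exact hxy, ?_⟩
    intro v hv
    have hv' : v ∈ σ.support := mem_support.2 hv
    have hv2 : v ∈ (Equiv.swap x y).support ∪ c.support := hsupp_le hv'
    rw [Equiv.Perm.support_swap hxy] at hv2
    rcases Finset.mem_union.1 hv2 with h | h
    · rcases Finset.mem_insert.1 h with h | h
      · rw [h]; exact hyx
      · rw [Finset.mem_singleton.1 h]
    · obtain ⟨i, _, hi⟩ := (hc.sameCycle hcx (mem_support.1 h)).exists_pow_eq'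
      exact hi ▸ key i
  refine ⟨hmain, ?_⟩
  ext v
  constructor
  · intro hv
    have hv2 := hsupp_le hv
    rw [Equiv.Perm.support_swap hxy] at hv2
    rcases Finset.mem_union.1 hv2 with h | h
    · rcases Finset.mem_insert.1 h with h | h
      · rw [h]; exact Finset.mem_insert_of_mem hx
      · rw [Finset.mem_singleton.1 h]; exact Finset.mem_insert_self _ _
    · exact Finset.mem_insert_of_mem h
  · intro hv
    rcases Finset.mem_insert.1 hv with rfl | hv
    · exact mem_support.2 (by rw [hσy]; exact hxy)
    · have hcv : c v ≠ v := mem_support.1 hv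
      refine mem_support.2 ?_
      simp only [hσ, Equiv.Perm.mul_apply]
      intro hcontra
      have hc' : c v = Equiv.swap x y v := by
        have := congrArg (Equiv.swap x y) hcontra
        rwa [Equiv.swap_apply_self] at this
      by_cases hvx : v = x
      · subst hvx
        rw [Equiv.swap_apply_left] at hc'
        exact hxy (c.injective (by rw [hc', hcy]))
      · by_cases hvy : v = y
        · exact hy (hvy ▸ hv)
        · rw [Equiv.swap_apply_of_ne_of_ne hvx hvy] at hc'
          exact hcv hc'

variable {β : Type*} [DecidableEq β] [Fintype β]

lemma ccount_eq (π : Equiv.Perm β) :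
    π.partition.parts.card = Multiset.card π.cycleType + (Fintype.card β - π.support.card) := by
  rw [Equiv.Perm.parts_partition]; simp

lemma ccount_swap_mul {π : Equiv.Perm β} {x y : β} (hxy : x ≠ y) (hy : π y = y) :
    (Equiv.swap x y * π).partition.parts.card + 1 = π.partition.parts.card := by
  classical
  have hysupp : y ∉ π.support := notMem_support.2 hy
  by_cases hx : π x = x
  · -- disjoint case
    have hxsupp : x ∉ π.support := notMem_support.2 hx
    have hdisj : Equiv.Perm.Disjoint (Equiv.swap x y) π := by
      rw [Equiv.Perm.disjoint_iff_disjoint_support, Equiv.Perm.support_swap hxy]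
      rw [Finset.disjoint_left]
      intro a ha
      rcases Finset.mem_insert.1 ha with rfl | ha
      · exact hxsupp
      · rw [Finset.mem_singleton.1 ha]; exact hysupp
    have hct : (Equiv.swap x y * π).cycleType = (Equiv.swap x y).cycleType + π.cycleType :=
      hdisj.cycleType_mul
    have hctswap : Multiset.card (Equiv.swap x y).cycleType = 1 := by
      rw [(Equiv.Perm.isCycle_swap hxy).cycleType]; rfl
    have hsupp : (Equiv.swap x y * π).support = (Equiv.swap x y).support ∪ π.support :=
      hdisj.support_mul
    have hcard : (Equiv.swap x y * π).support.card = 2 + π.support.card := by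
      rw [hsupp, Finset.card_union_of_disjoint (Equiv.Perm.disjoint_iff_disjoint_support.1 hdisj),
        Equiv.Perm.card_support_swap hxy]
    have hb : (Equiv.swap x y * π).support.card ≤ Fintype.card β := Finset.card_le_univ _
    rw [ccount_eq, ccount_eq, hct, Multiset.card_add, hctswap, hcard]
    omega
  · -- x in a cycle of π
    set c := π.cycleOf x with hc_def
    set z := π * c⁻¹ with hz_def
    have hzc : z * c = π := by rw [hz_def]; group
    have hcx : c x = π x := π.cycleOf_apply_self x
    have hcy : c y = y := by
      rw [hc_def, Equiv.Perm.cycleOf_apply]; split <;> simp [hy]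
    have hcyinv : c⁻¹ y = y := by
      conv_lhs => rw [← hcy]
      exact c.symm_apply_apply y
    have hdisj : Equiv.Perm.Disjoint z c := by
      intro w
      by_cases h : π.SameCycle x w
      · left
        have hcw : c⁻¹ w = π⁻¹ w := by
          rw [hc_def, Equiv.Perm.cycleOf_inv, Equiv.Perm.cycleOf_apply,
            if_pos (Equiv.Perm.sameCycle_inv.2 h)]
        show (π * c⁻¹) w = w
        rw [Equiv.Perm.mul_apply, hcw, ← Equiv.Perm.mul_apply, mul_inv_cancel, Equiv.Perm.one_apply]
      · right
        rw [hc_def, Equiv.Perm.cycleOf_apply, if_neg h]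
    have hxc : x ∈ c.support := mem_support.2 (by rw [hcx]; exact hx)
    have hyc : y ∉ c.support := notMem_support.2 hcy
    have hzy : z y = y := by
      show (π * c⁻¹) y = y
      rw [Equiv.Perm.mul_apply, hcyinv, hy]
    have hzx : z x = x := by
      rcases hdisj x with h | h
      · exact h
      · exact absurd h (mem_support.1 hxc)
    have hyz : y ∉ z.support := notMem_support.2 hzy
    have hxz : x ∉ z.support := notMem_support.2 hzx
    have hcyc : c.IsCycle := π.isCycle_cycleOf hx
    obtain ⟨hC, hS⟩ := isCycle_swap_mul_extend hcyc hxc hyc hxy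
    have hcomm : Commute (Equiv.swap x y) z := by
      apply Equiv.Perm.Disjoint.commute
      rw [Equiv.Perm.disjoint_iff_disjoint_support, Equiv.Perm.support_swap hxy,
        Finset.disjoint_left]
      intro a ha
      rcases Finset.mem_insert.1 ha with rfl | ha
      · exact hxz
      · rw [Finset.mem_singleton.1 ha]; exact hyz
    have hfact : Equiv.swap x y * π = z * (Equiv.swap x y * c) := by
      rw [← hzc, ← mul_assoc, hcomm.eq, mul_assoc]
    have hdisjzc : _root_.Disjoint z.support c.support :=
      Equiv.Perm.disjoint_iff_disjoint_support.1 hdisj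
    have hdisj2 : Equiv.Perm.Disjoint z (Equiv.swap x y * c) := by
      rw [Equiv.Perm.disjoint_iff_disjoint_support, hS, Finset.disjoint_right]
      intro a ha
      rcases Finset.mem_insert.1 ha with rfl | ha
      · exact hyz
      · exact Finset.disjoint_right.1 hdisjzc ha
    -- cycle types
    have hctσ : (Equiv.swap x y * π).cycleType = z.cycleType + (Equiv.swap x y * c).cycleType := by
      rw [hfact]; exact hdisj2.cycleType_mul
    have hctπ : π.cycleType = z.cycleType + c.cycleType := by
      rw [← hzc]; exact hdisj.cycleType_mul
    have hctc : Multiset.card c.cycleType = 1 := by rw [hcyc.cycleType]; rfl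
    have hctC : Multiset.card (Equiv.swap x y * c).cycleType = 1 := by rw [hC.cycleType]; rfl
    -- supports
    have hsσ : (Equiv.swap x y * π).support = insert y π.support := by
      rw [hfact, hdisj2.support_mul, hS, ← hzc, hdisj.support_mul, Finset.union_insert]
    have hynπ : y ∉ π.support := hysupp
    have hcardσ : (Equiv.swap x y * π).support.card = π.support.card + 1 := by
      rw [hsσ, Finset.card_insert_of_notMem hynπ]
    have hb : π.support.card < Fintype.card β := by
      rw [Finset.card_lt_iff_ne_univ]
      intro h
      exact hynπ (h ▸ Finset.mem_univ y)
    rw [ccount_eq, ccount_eq, hctσ, hctπ, Multiset.card_add, Multiset.card_add, hctC, hctc,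
      hcardσ]
    omega

lemma ccount_one : (1 : Equiv.Perm β).partition.parts.card = Fintype.card β := by
  rw [ccount_eq]; simp


section Gram

variable (d N : ℕ)

abbrev MA := Matrix (Equiv.Perm (Fin d)) (Equiv.Perm (Fin d)) ℂ

noncomputable def Pmat (g : Equiv.Perm (Fin d)) : MA d :=
  Matrix.of fun a b => if a * g = b then 1 else 0

lemma Pmat_mul (g h : Equiv.Perm (Fin d)) : Pmat d g * Pmat d h = Pmat d (g * h) := by
  ext a b
  simp only [Matrix.mul_apply, Pmat, Matrix.of_apply, ite_mul, one_mul, zero_mul]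
  rw [Finset.sum_ite_eq Finset.univ (a * g) (fun x => if x * h = b then (1:ℂ) else 0)]
  simp [mul_assoc]

lemma Pmat_one : Pmat d 1 = 1 := by
  ext a b
  simp [Pmat, Matrix.one_apply]

noncomputable def Jfin (t : Fin d) : MA d :=
  ∑ s ∈ Finset.univ.filter (· < t), Pmat d (Equiv.swap s t)

noncomputable def Jnat (k : ℕ) : MA d :=
  ∑ t : Fin d, if (t : ℕ) = k then Jfin d t else 0

lemma Jnat_eq {k : ℕ} (hk : k < d) : Jnat d k = Jfin d ⟨k, hk⟩ := by
  rw [Jnat, Finset.sum_eq_single ⟨k, hk⟩]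
  · rw [if_pos rfl]
  · intro t _ ht
    rw [if_neg (fun h => ht (Fin.ext h))]
  · intro h; exact absurd (Finset.mem_univ _) h

lemma Jnat_eq_zero {k : ℕ} (hk : d ≤ k) : Jnat d k = 0 := by
  rw [Jnat]
  apply Finset.sum_eq_zero
  intro t _
  rw [if_neg]
  omega

noncomputable def Fk : ℕ → MA d
  | 0 => 1
  | (k+1) => (((N : ℕ) : ℂ) • 1 + Jnat d k) * Fk k

noncomputable def Efin (k : ℕ) : Finset (Equiv.Perm (Fin d)) :=
  Finset.univ.filter (fun π => ∀ x : Fin d, k ≤ (x : ℕ) → π x = x)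

lemma mem_Efin {k : ℕ} {π : Equiv.Perm (Fin d)} :
    π ∈ Efin d k ↔ ∀ x : Fin d, k ≤ (x : ℕ) → π x = x := by
  simp [Efin]


lemma Fk_eq (hN : 0 < N) : ∀ k, k ≤ d →
    ((N : ℂ) ^ (d - k)) • Fk d N k =
      ∑ π ∈ Efin d k, ((N : ℂ) ^ (π.partition.parts.card)) • Pmat d π := by
  intro k
  induction k with
  | zero =>
    intro _
    have hE : Efin d 0 = {1} := by
      ext π
      simp only [mem_Efin, Finset.mem_singleton]
      constructor
      · intro h; exact Equiv.ext fun x => h x (Nat.zero_le _)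
      · intro h x _; rw [h]; rfl
    rw [hE, Finset.sum_singleton, ccount_one, Fintype.card_fin, Pmat_one]
    simp [Fk]
  | succ k ih =>
    intro hk1
    have hk : k < d := hk1
    set t : Fin d := ⟨k, hk⟩ with ht_def
    have htval : (t : ℕ) = k := rfl
    have hNC : ((N : ℕ) : ℂ) ≠ 0 := Nat.cast_ne_zero.2 hN.ne'
    apply smul_right_injective (MA d) hNC
    show ((N:ℂ)) • _ = ((N:ℂ)) • _
    have hdk : d - k = (d - (k+1)) + 1 := by omega
    conv_lhs => rw [smul_smul, ← pow_succ', ← hdk]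
    have step1 : ((N : ℂ) ^ (d - k)) • Fk d N (k+1)
        = (((N : ℕ) : ℂ) • 1 + Jnat d k) * (((N : ℂ) ^ (d - k)) • Fk d N k) := by
      show _ • ((((N : ℕ) : ℂ) • 1 + Jnat d k) * Fk d N k) = _
      rw [mul_smul_comm]
    rw [step1, ih hk.le]
    rw [add_mul, smul_mul_assoc, one_mul, Finset.smul_sum, Finset.mul_sum]
    have piece1 : ∀ π ∈ Efin d k,
        ((N:ℕ):ℂ) • (((N : ℂ) ^ (π.partition.parts.card)) • Pmat d π)
          = ((N : ℂ) ^ (π.partition.parts.card + 1)) • Pmat d π := by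
      intro π _
      rw [smul_smul, ← pow_succ']
    rw [Finset.sum_congr rfl piece1]
    have piece2 : ∀ π ∈ Efin d k,
        Jnat d k * (((N : ℂ) ^ (π.partition.parts.card)) • Pmat d π)
          = ∑ s ∈ Finset.univ.filter (· < t),
              ((N : ℂ) ^ (π.partition.parts.card)) • Pmat d (Equiv.swap s t * π) := by
      intro π _
      rw [Jnat_eq d hk, Jfin, Finset.sum_mul]
      refine Finset.sum_congr rfl fun s _ => ?_
      rw [mul_smul_comm, Pmat_mul]
    rw [Finset.sum_congr rfl piece2]
    -- right-hand side
    have rhs1 : (↑N : ℂ) • ∑ π ∈ Efin d (k+1), ((N : ℂ) ^ (π.partition.parts.card)) • Pmat d π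
        = ∑ π ∈ Efin d (k+1), ((N : ℂ) ^ (π.partition.parts.card + 1)) • Pmat d π := by
      rw [Finset.smul_sum]
      refine Finset.sum_congr rfl fun π _ => ?_
      rw [smul_smul, ← pow_succ']
    rw [rhs1]
    rw [← Finset.sum_filter_add_sum_filter_not (Efin d (k+1)) (fun σ => σ t = t)
      (fun π => ((N : ℂ) ^ (π.partition.parts.card + 1)) • Pmat d π)]
    have hEsplit : (Efin d (k+1)).filter (fun σ => σ t = t) = Efin d k := by
      ext σ
      simp only [mem_Efin, Finset.mem_filter]
      constructor
      · rintro ⟨h1, h2⟩ x hx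
        rcases Nat.eq_or_lt_of_le hx with hx' | hx'
        · have hxt : x = t := Fin.ext hx'.symm
          rw [hxt]; exact h2
        · exact h1 x hx'
      · intro h
        exact ⟨fun x hx => h x (by omega), h t (le_of_eq htval.symm)⟩
    rw [hEsplit]
    congr 1
    -- the moving part, via a bijection
    rw [← Finset.sum_product' (s := Efin d k) (t := Finset.univ.filter (· < t))
      (f := fun π s => ((N : ℂ) ^ (π.partition.parts.card)) • Pmat d (Equiv.swap s t * π))]
    refine Finset.sum_nbij' (fun p => Equiv.swap p.2 t * p.1)
      (fun σ => (Equiv.swap (σ t) t * σ, σ t)) ?_ ?_ ?_ ?_ ?_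
    · rintro ⟨π, s⟩ hp
      rw [Finset.mem_product] at hp
      obtain ⟨hπ, hs⟩ := hp
      rw [Finset.mem_filter] at hs
      have hst : s < t := hs.2
      have hπt : π t = t := (mem_Efin _).1 hπ t (le_of_eq htval.symm)
      rw [Finset.mem_filter]
      constructor
      · refine (mem_Efin _).2 fun x hx => ?_
        have hπx : π x = x := (mem_Efin _).1 hπ x (by omega)
        have hxs : x ≠ s := by
          intro h; subst h
          have := hst
          simp only [Fin.lt_def, htval] at this
          omega
        have hxt : x ≠ t := by
          intro h; subst h
          simp only [htval] at hx
          omega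
        show Equiv.swap s t (π x) = x
        rw [hπx]
        exact Equiv.swap_apply_of_ne_of_ne hxs hxt
      · show Equiv.swap s t (π t) ≠ t
        rw [hπt, Equiv.swap_apply_right]
        exact Fin.ne_of_lt hst
    · intro σ hσ
      rw [Finset.mem_filter] at hσ
      obtain ⟨hσ1, hσ2⟩ := hσ
      have hs0 : (σ t : ℕ) < k := by
        have hle : (σ t : ℕ) ≤ k := by
          by_contra h
          push_neg at h
          have h2 : σ (σ t) = σ t := (mem_Efin _).1 hσ1 (σ t) h
          exact hσ2 (σ.injective h2)
        have hne : (σ t : ℕ) ≠ k := by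
          intro h
          exact hσ2 (Fin.ext h)
        omega
      rw [Finset.mem_product]
      constructor
      · refine (mem_Efin _).2 fun x hx => ?_
        by_cases hxt : x = t
        · subst hxt
          show Equiv.swap (σ t) t (σ t) = t
          exact Equiv.swap_apply_left _ _
        · have hx1 : k + 1 ≤ (x : ℕ) := by
            rcases Nat.eq_or_lt_of_le hx with h | h
            · exact absurd (Fin.ext h.symm) hxt
            · omega
          have hσx : σ x = x := (mem_Efin _).1 hσ1 x hx1
          show Equiv.swap (σ t) t (σ x) = x
          rw [hσx]
          refine Equiv.swap_apply_of_ne_of_ne (fun h => ?_) hxt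
          subst h
          omega
      · rw [Finset.mem_filter]
        exact ⟨Finset.mem_univ _, by rw [Fin.lt_def, htval]; exact hs0⟩
    · rintro ⟨π, s⟩ hp
      rw [Finset.mem_product] at hp
      obtain ⟨hπ, hs⟩ := hp
      rw [Finset.mem_filter] at hs
      have hπt : π t = t := (mem_Efin _).1 hπ t (le_of_eq htval.symm)
      have hσt : (Equiv.swap s t * π) t = s := by
        show Equiv.swap s t (π t) = s
        rw [hπt, Equiv.swap_apply_right]
      show (Equiv.swap ((Equiv.swap s t * π) t) t * (Equiv.swap s t * π),
          (Equiv.swap s t * π) t) = (π, s)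
      rw [hσt, ← mul_assoc, Equiv.swap_mul_self, one_mul]
    · intro σ hσ
      show Equiv.swap (σ t) t * (Equiv.swap (σ t) t * σ) = σ
      rw [← mul_assoc, Equiv.swap_mul_self, one_mul]
    · rintro ⟨π, s⟩ hp
      rw [Finset.mem_product] at hp
      obtain ⟨hπ, hs⟩ := hp
      rw [Finset.mem_filter] at hs
      have hst : s ≠ t := Fin.ne_of_lt hs.2
      have hπt : π t = t := (mem_Efin _).1 hπ t (le_of_eq htval.symm)
      have hmerge := ccount_swap_mul (π := π) hst hπt
      show ((N : ℂ) ^ (π.partition.parts.card)) • Pmat d (Equiv.swap s t * π)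
          = ((N : ℂ) ^ ((Equiv.swap s t * π).partition.parts.card + 1)) •
              Pmat d (Equiv.swap s t * π)
      rw [hmerge]

lemma Fk_top (hN : 0 < N) : Fk d N d =
    Matrix.of (fun ρ σ : Equiv.Perm (Fin d) =>
      (N : ℂ) ^ ((ρ⁻¹ * σ).partition.parts.card)) := by
  have h := Fk_eq d N hN d le_rfl
  rw [Nat.sub_self, pow_zero, one_smul] at h
  have hE : Efin d d = Finset.univ := by
    ext π
    simp only [mem_Efin, Finset.mem_univ, iff_true]
    intro x hx
    exact absurd x.isLt (by omega)
  rw [hE] at h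
  rw [h]
  ext ρ σ
  rw [Matrix.sum_apply]
  rw [Finset.sum_eq_single (ρ⁻¹ * σ)]
  · simp only [Matrix.smul_apply, Pmat, Matrix.of_apply, mul_inv_cancel_left]
    rw [if_pos (by group), smul_eq_mul, mul_one]
  · intro π _ hπ
    simp only [Matrix.smul_apply, Pmat, Matrix.of_apply]
    rw [if_neg, smul_zero]
    intro hcontra
    exact hπ (by rw [← hcontra]; group)
  · intro h'; exact absurd (Finset.mem_univ _) h'

def MonoBelow (k : ℕ) {r : ℕ} (τ : Fin r → Equiv.Perm (Fin d)) : Prop :=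
  (∀ i, (τ i).IsSwap) ∧ (Monotone fun i => (τ i).support.max) ∧
    ∀ i, ∀ x ∈ (τ i).support, (x : ℕ) < k

open Classical in
noncomputable def Mmat (k r : ℕ) : MA d :=
  ∑ τ ∈ Finset.univ.filter (fun τ : Fin r → Equiv.Perm (Fin d) => MonoBelow d k τ),
    Pmat d ((List.ofFn τ).prod)

lemma Mmat_zero (k : ℕ) : Mmat d k 0 = 1 := by
  classical
  rw [Mmat, Finset.filter_true_of_mem, Finset.univ_unique, Finset.sum_singleton]
  · simp [Pmat_one]
  · intro τ _
    exact ⟨fun i => i.elim0, fun i => i.elim0, fun i => i.elim0⟩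

lemma Mmat_bot (r : ℕ) : Mmat d 0 (r + 1) = 0 := by
  classical
  rw [Mmat, Finset.filter_false_of_mem, Finset.sum_empty]
  intro τ _ hM
  obtain ⟨x, y, hxy, he⟩ := hM.1 0
  have hx : x ∈ (τ 0).support := by
    rw [he, Equiv.Perm.support_swap hxy]
    exact Finset.mem_insert_self _ _
  exact absurd (hM.2.2 0 x hx) (by omega)

lemma top_structure {k n : ℕ} (hk : k < d) (τ : Fin (n + 1) → Equiv.Perm (Fin d))
    (hM : MonoBelow d (k + 1) τ)
    (hq : ¬ (∀ i, ∀ x ∈ (τ i).support, (x : ℕ) < k)) :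
    τ (Fin.last n) = Equiv.swap (τ (Fin.last n) ⟨k, hk⟩) ⟨k, hk⟩ ∧
      (τ (Fin.last n) ⟨k, hk⟩) < (⟨k, hk⟩ : Fin d) := by
  classical
  set t : Fin d := ⟨k, hk⟩ with ht_def
  push_neg at hq
  obtain ⟨i, x, hxm, hxk⟩ := hq
  have hxk1 : (x : ℕ) < k + 1 := hM.2.2 i x hxm
  have hxt : x = t := by
    apply Fin.ext
    show (x : ℕ) = k
    omega
  have h1 : (t : WithBot (Fin d)) ≤ (τ i).support.max := Finset.le_max (hxt ▸ hxm)
  have h2 : (τ i).support.max ≤ (τ (Fin.last n)).support.max := hM.2.1 (Fin.le_last i)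
  have h3 : (τ (Fin.last n)).support.max ≤ (t : WithBot (Fin d)) := by
    apply Finset.max_le
    intro y hy
    have hyk : (y : ℕ) < k + 1 := hM.2.2 _ y hy
    exact WithBot.coe_le_coe.2 (by rw [Fin.le_def]; show _ ≤ k; omega)
  have hmax : (τ (Fin.last n)).support.max = (t : WithBot (Fin d)) :=
    le_antisymm h3 (h1.trans h2)
  have htm : t ∈ (τ (Fin.last n)).support := Finset.mem_of_max hmax
  have hs0ne : τ (Fin.last n) t ≠ t := Equiv.Perm.mem_support.1 htm
  have hs0m : τ (Fin.last n) t ∈ (τ (Fin.last n)).support :=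
    Equiv.Perm.apply_mem_support.2 htm
  have hs0lt : τ (Fin.last n) t < t := by
    have h4 : (τ (Fin.last n) t : ℕ) < k + 1 := hM.2.2 _ _ hs0m
    have h5 : (τ (Fin.last n) t : ℕ) ≠ k := fun h => hs0ne (Fin.ext h)
    rw [Fin.lt_def]
    show _ < k
    omega
  refine ⟨?_, hs0lt⟩
  obtain ⟨a, b, hab, he⟩ := hM.1 (Fin.last n)
  have htab : t = a ∨ t = b := by
    have htm' := htm
    rw [he, Equiv.Perm.support_swap hab] at htm'
    rcases Finset.mem_insert.1 htm' with h | h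
    · exact Or.inl h
    · exact Or.inr (Finset.mem_singleton.1 h)
  rcases htab with rfl | rfl
  · rw [he, Equiv.swap_apply_left, Equiv.swap_comm]
  · rw [he, Equiv.swap_apply_right]

lemma Mmat_succ {k : ℕ} (hk : k < d) (n : ℕ) :
    Mmat d (k + 1) (n + 1) = Mmat d k (n + 1) + Mmat d (k + 1) n * Jnat d k := by
  classical
  set t : Fin d := ⟨k, hk⟩ with ht_def
  rw [Mmat, ← Finset.sum_filter_add_sum_filter_not
    (Finset.univ.filter (fun τ : Fin (n+1) → Equiv.Perm (Fin d) => MonoBelow d (k+1) τ))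
    (fun τ => ∀ i, ∀ x ∈ (τ i).support, (x : ℕ) < k)]
  congr 1
  · -- all tops below k
    rw [Finset.filter_filter, Mmat]
    apply Finset.sum_congr
    · apply Finset.filter_congr
      intro τ _
      constructor
      · rintro ⟨hM, hq⟩
        exact ⟨hM.1, hM.2.1, hq⟩
      · intro hM
        exact ⟨⟨hM.1, hM.2.1, fun i x hx => by have := hM.2.2 i x hx; omega⟩, hM.2.2⟩
    · intro _ _; rfl
  · -- last factor has top exactly k
    rw [Jnat_eq d hk, Jfin, Mmat, Finset.sum_mul_sum]
    rw [← Finset.sum_product'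
      (s := Finset.univ.filter (fun τ : Fin n → Equiv.Perm (Fin d) => MonoBelow d (k+1) τ))
      (t := Finset.univ.filter (· < t))
      (f := fun τ' s => Pmat d ((List.ofFn τ').prod) * Pmat d (Equiv.swap s t))]
    refine Finset.sum_nbij' (fun τ => (Fin.init τ, τ (Fin.last n) t))
      (fun p => Fin.snoc p.1 (Equiv.swap p.2 t)) ?_ ?_ ?_ ?_ ?_
    · intro τ hτ
      rw [Finset.mem_filter, Finset.mem_filter] at hτ
      obtain ⟨⟨_, hM⟩, hq⟩ := hτ
      obtain ⟨he, hlt⟩ := top_structure d hk τ hM hq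
      rw [Finset.mem_product, Finset.mem_filter, Finset.mem_filter]
      refine ⟨⟨Finset.mem_univ _, ?_, ?_, ?_⟩, Finset.mem_univ _, hlt⟩
      · intro i; exact hM.1 _
      · intro i j hij
        exact hM.2.1 (by rwa [Fin.castSucc_le_castSucc_iff])
      · intro i x hx; exact hM.2.2 _ x hx
    · rintro ⟨τ', s⟩ hp
      rw [Finset.mem_product, Finset.mem_filter, Finset.mem_filter] at hp
      obtain ⟨⟨_, hM⟩, _, hs⟩ := hp
      have hst : s ≠ t := Fin.ne_of_lt hs
      set sn : Fin (n+1) → Equiv.Perm (Fin d) := Fin.snoc τ' (Equiv.swap s t) with hsn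
      have hsn_last : sn (Fin.last n) = Equiv.swap s t := by rw [hsn]; exact Fin.snoc_last _ _
      have hsn_cast : ∀ j : Fin n, sn (Fin.castSucc j) = τ' j := by
        intro j; rw [hsn]; exact Fin.snoc_castSucc _ _ _
      have hsnoc_swap : ∀ i, (sn i).IsSwap := by
        intro i
        refine Fin.lastCases ?_ ?_ i
        · rw [hsn_last]; exact ⟨s, t, hst, rfl⟩
        · intro j; rw [hsn_cast]; exact hM.1 j
      have hbound : ∀ i, ∀ x ∈ (sn i).support, (x : ℕ) < k + 1 := by
        intro i
        refine Fin.lastCases ?_ ?_ i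
        · rw [hsn_last]
          intro x hx
          rw [Equiv.Perm.support_swap hst] at hx
          rcases Finset.mem_insert.1 hx with rfl | hx
          · have h2 : (x : ℕ) < k := hs
            omega
          · rw [Finset.mem_singleton.1 hx]
            show k < k + 1
            omega
        · intro j; rw [hsn_cast]; exact hM.2.2 j
      have hmaxle : ∀ i, (sn i).support.max ≤ (t : WithBot (Fin d)) := by
        intro i
        apply Finset.max_le
        intro y hy
        have := hbound i y hy
        exact WithBot.coe_le_coe.2 (by rw [Fin.le_def]; show _ ≤ k; omega)
      have hmaxlast : (sn (Fin.last n)).support.max = (t : WithBot (Fin d)) := by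
        apply le_antisymm (hmaxle _)
        apply Finset.le_max
        rw [hsn_last, Equiv.Perm.support_swap hst]
        exact Finset.mem_insert_of_mem (Finset.mem_singleton_self t)
      rw [Finset.mem_filter, Finset.mem_filter]
      refine ⟨⟨Finset.mem_univ _, hsnoc_swap, ?_, hbound⟩, ?_⟩
      · -- monotone
        intro i j hij
        revert hij
        refine Fin.lastCases ?_ ?_ j
        · intro _
          show (sn i).support.max ≤ (sn (Fin.last n)).support.max
          rw [hmaxlast]; exact hmaxle i
        · intro j' hij'
          revert hij'
          refine Fin.lastCases ?_ ?_ i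
          · intro hlast
            exact absurd hlast (not_le.2 (Fin.castSucc_lt_last j'))
          · intro i' hii'
            show (sn (Fin.castSucc i')).support.max ≤ (sn (Fin.castSucc j')).support.max
            rw [hsn_cast, hsn_cast]
            exact hM.2.1 (by rwa [Fin.castSucc_le_castSucc_iff] at hii')
      · -- not all below k
        intro hall
        have hmem : t ∈ (sn (Fin.last n)).support := by
          rw [hsn_last, Equiv.Perm.support_swap hst]
          exact Finset.mem_insert_of_mem (Finset.mem_singleton_self t)
        have := hall (Fin.last n) t hmem
        have htk : (t : ℕ) = k := rfl
        omega
    · intro τ hτ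
      rw [Finset.mem_filter, Finset.mem_filter] at hτ
      obtain ⟨⟨_, hM⟩, hq⟩ := hτ
      obtain ⟨he, _⟩ := top_structure d hk τ hM hq
      show Fin.snoc (Fin.init τ) (Equiv.swap (τ (Fin.last n) t) t) = τ
      rw [← he]
      exact Fin.snoc_init_self τ
    · rintro ⟨τ', s⟩ _
      simp only [Fin.init_snoc, Fin.snoc_last, Equiv.swap_apply_right]
    · intro τ hτ
      rw [Finset.mem_filter, Finset.mem_filter] at hτ
      obtain ⟨⟨_, hM⟩, hq⟩ := hτ
      obtain ⟨he, _⟩ := top_structure d hk τ hM hq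
      show Pmat d ((List.ofFn τ).prod)
        = Pmat d ((List.ofFn (Fin.init τ)).prod) * Pmat d (Equiv.swap (τ (Fin.last n) t) t)
      have key : (List.ofFn τ).prod
          = (List.ofFn (Fin.init τ)).prod * Equiv.swap (τ (Fin.last n) t) t := by
        rw [List.ofFn_succ' τ, List.prod_concat, ← he]
        rfl
      rw [key, ← Pmat_mul]

end Gram

lemma summable_rec {a c : ℕ → ℝ} {q : ℝ} (ha : Summable a) (ha0 : ∀ n, 0 ≤ a n)
    (hc0 : ∀ n, 0 ≤ c n) (hq0 : 0 ≤ q) (hq1 : q < 1) (h0 : c 0 ≤ a 0)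
    (hrec : ∀ n, c (n + 1) ≤ a (n + 1) + q * c n) : Summable c := by
  have key : ∀ m, ∑ i ∈ Finset.range (m + 1), c i
      ≤ ∑ i ∈ Finset.range (m + 1), a i + q * ∑ i ∈ Finset.range m, c i := by
    intro m
    induction m with
    | zero => simpa using h0
    | succ m ih =>
      rw [Finset.sum_range_succ (f := c), Finset.sum_range_succ (f := a)]
      have h2 := hrec m
      have h3 : q * ∑ i ∈ Finset.range (m + 1), c i
          = q * ∑ i ∈ Finset.range m, c i + q * c m := by
        rw [Finset.sum_range_succ, mul_add]
      linarith
  have hbound : ∀ m, ∑ i ∈ Finset.range m, c i ≤ (∑' i, a i) / (1 - q) := by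
    intro m
    have hA : ∀ m', ∑ i ∈ Finset.range m', a i ≤ ∑' i, a i := fun m' =>
      Summable.sum_le_tsum _ (fun i _ => ha0 i) ha
    have hpos : 0 < 1 - q := by linarith
    rcases Nat.eq_zero_or_pos m with rfl | hm
    · simp only [Finset.range_zero, Finset.sum_empty]
      have h5 : (0:ℝ) ≤ ∑' i, a i := tsum_nonneg ha0
      have hpos' : (0:ℝ) < 1 - q := by linarith
      positivity
    · obtain ⟨m', rfl⟩ := Nat.exists_eq_add_of_lt hm
      rw [zero_add] at *
      have h1 := key m'
      have h2 : ∑ i ∈ Finset.range m', c i ≤ ∑ i ∈ Finset.range (m' + 1), c i := by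
        rw [Finset.sum_range_succ]
        have := hc0 m'
        linarith
      have h4 : (1 - q) * ∑ i ∈ Finset.range (m' + 1), c i ≤ ∑' i, a i := by
        have := hA (m' + 1)
        nlinarith
      rw [le_div_iff₀ hpos]
      linarith [mul_comm (1 - q) (∑ i ∈ Finset.range (m' + 1), c i)]
  exact summable_of_sum_range_le hc0 hbound

section Analysis

attribute [local instance] Matrix.linftyOpNormedRing Matrix.linftyOpNormedAlgebra

variable (d N : ℕ)

lemma norm_Pmat (g : Equiv.Perm (Fin d)) : ‖Pmat d g‖ ≤ 1 := by
  have h : ‖Pmat d g‖₊ ≤ 1 := by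
    rw [Matrix.linfty_opNNNorm_def]
    apply Finset.sup_le
    intro a _
    have : ∀ b, ‖Pmat d g a b‖₊ = if a * g = b then 1 else 0 := by
      intro b
      simp [Pmat, apply_ite]
    rw [Finset.sum_congr rfl (fun b _ => this b)]
    rw [Finset.sum_ite_eq Finset.univ (a * g) (fun _ => (1 : NNReal))]
    simp
  exact_mod_cast h

lemma norm_Jnat {k : ℕ} (hk : k < d) : ‖Jnat d k‖ ≤ (k : ℝ) := by
  rw [Jnat_eq d hk, Jfin]
  refine (norm_sum_le _ _).trans ?_
  have hcard : (Finset.univ.filter (· < (⟨k, hk⟩ : Fin d))).card = k := by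
    have he : Finset.univ.filter (· < (⟨k, hk⟩ : Fin d)) = Finset.Iio ⟨k, hk⟩ := by
      ext x; simp
    rw [he, Fin.card_Iio]
  calc ∑ s ∈ Finset.univ.filter (· < (⟨k, hk⟩ : Fin d)), ‖Pmat d (Equiv.swap s ⟨k, hk⟩)‖
      ≤ ∑ _s ∈ Finset.univ.filter (· < (⟨k, hk⟩ : Fin d)), 1 :=
        Finset.sum_le_sum (fun s _ => norm_Pmat d _)
    _ = (k : ℝ) := by rw [Finset.sum_const, hcard]; simp

lemma entry_norm_le (A : MA d) (ρ σ : Equiv.Perm (Fin d)) : ‖A ρ σ‖ ≤ ‖A‖ := by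
  have h : ‖A ρ σ‖₊ ≤ ‖A‖₊ := by
    rw [Matrix.linfty_opNNNorm_def]
    calc ‖A ρ σ‖₊ ≤ ∑ j, ‖A ρ j‖₊ :=
          Finset.single_le_sum (f := fun j => ‖A ρ j‖₊) (fun _ _ => by positivity) (Finset.mem_univ σ)
      _ ≤ _ := Finset.le_sup (f := fun i => ∑ j, ‖A i j‖₊) (Finset.mem_univ ρ)
  exact_mod_cast h

lemma norm_coef (hN : 0 < N) (k r : ℕ) :
    ‖((-1 : ℂ) ^ r * ((N : ℂ) ^ (k + r))⁻¹)‖ = (((N : ℝ) ^ (k + r))⁻¹) := by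
  rw [norm_mul, norm_pow, norm_neg, norm_one, one_pow, one_mul, norm_inv, norm_pow]
  norm_num

lemma main_induction (hd : 1 ≤ d) (hdN : d ≤ N) : ∀ k, k ≤ d →
    Summable (fun r : ℕ => ‖((-1 : ℂ) ^ r * ((N : ℂ) ^ (k + r))⁻¹) • Mmat d k r‖) ∧
      (∑' r : ℕ, ((-1 : ℂ) ^ r * ((N : ℂ) ^ (k + r))⁻¹) • Mmat d k r) * Fk d N k = 1 := by
  have hN : 0 < N := lt_of_lt_of_le hd hdN
  have hNR : (0:ℝ) < (N:ℝ) := by exact_mod_cast hN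
  have hNC : ((N:ℕ):ℂ) ≠ 0 := Nat.cast_ne_zero.2 hN.ne'
  haveI : CompleteSpace (MA d) := FiniteDimensional.complete ℂ _
  have hnorm : ∀ (k' r : ℕ) (M : MA d), ‖((-1 : ℂ) ^ r * ((N : ℂ) ^ (k' + r))⁻¹) • M‖
      = ((N : ℝ) ^ (k' + r))⁻¹ * ‖M‖ := by
    intro k' r M
    rw [norm_smul, norm_coef N hN]
  intro k
  induction k with
  | zero =>
    intro _
    constructor
    · apply (summable_nat_add_iff 1).1
      have hz : (fun r : ℕ => ‖((-1 : ℂ) ^ (r+1) * ((N : ℂ) ^ (0 + (r+1)))⁻¹) • Mmat d 0 (r+1)‖)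
          = fun _ => (0:ℝ) := by
        funext r
        rw [Mmat_bot, smul_zero, norm_zero]
      exact hz ▸ summable_zero
    · have ht : (∑' r : ℕ, ((-1 : ℂ) ^ r * ((N : ℂ) ^ (0 + r))⁻¹) • Mmat d 0 r) = 1 := by
        rw [tsum_eq_single 0]
        · rw [Mmat_zero]; norm_num
        · intro b hb
          obtain ⟨r, rfl⟩ := Nat.exists_eq_succ_of_ne_zero hb
          rw [Mmat_bot, smul_zero]
      rw [ht, show Fk d N 0 = 1 from rfl, mul_one]
  | succ k ih =>
    intro hk1
    have hk : k < d := hk1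
    obtain ⟨hSum_k, hId_k⟩ := ih hk.le
    have hJ : ‖Jnat d k‖ ≤ (k : ℝ) := norm_Jnat d hk
    have hS1 : Summable (fun r : ℕ =>
        ‖((-1 : ℂ) ^ r * ((N : ℂ) ^ ((k+1) + r))⁻¹) • Mmat d (k+1) r‖) := by
      apply summable_rec
        (a := fun r => (N:ℝ)⁻¹ * ‖((-1 : ℂ) ^ r * ((N : ℂ) ^ (k + r))⁻¹) • Mmat d k r‖)
        (q := (k : ℝ) / N)
      · exact hSum_k.mul_left _
      · intro n; positivity
      · intro n; positivity
      · positivity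
      · rw [div_lt_one hNR]; exact_mod_cast lt_of_lt_of_le hk hdN
      · rw [hnorm, hnorm, Mmat_zero, Mmat_zero]
        apply le_of_eq
        rw [add_zero, add_zero, pow_succ, mul_inv]
        ring
      · intro n
        rw [hnorm, hnorm, hnorm]
        have hrec := Mmat_succ d hk n
        have hstep : ‖Mmat d (k+1) (n+1)‖ ≤ ‖Mmat d k (n+1)‖ + ‖Mmat d (k+1) n‖ * (k:ℝ) := by
          rw [hrec]
          refine (norm_add_le _ _).trans ?_
          have h2 : ‖Mmat d (k+1) n * Jnat d k‖ ≤ ‖Mmat d (k+1) n‖ * (k:ℝ) :=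
            (norm_mul_le _ _).trans (mul_le_mul_of_nonneg_left hJ (norm_nonneg _))
          linarith
        calc ((N:ℝ) ^ (k+1+(n+1)))⁻¹ * ‖Mmat d (k+1) (n+1)‖
            ≤ ((N:ℝ) ^ (k+1+(n+1)))⁻¹ * (‖Mmat d k (n+1)‖ + ‖Mmat d (k+1) n‖ * (k:ℝ)) := by
              apply mul_le_mul_of_nonneg_left hstep
              positivity
          _ = (N:ℝ)⁻¹ * (((N:ℝ) ^ (k+(n+1)))⁻¹ * ‖Mmat d k (n+1)‖)
              + (k:ℝ)/(N:ℝ) * (((N:ℝ) ^ (k+1+n))⁻¹ * ‖Mmat d (k+1) n‖) := by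
              field_simp
              ring
    have hSumM : Summable (fun r : ℕ =>
        ((-1 : ℂ) ^ r * ((N : ℂ) ^ ((k+1) + r))⁻¹) • Mmat d (k+1) r) :=
      Summable.of_norm hS1
    have hsumA : Summable (fun r : ℕ =>
        ((-1 : ℂ) ^ r * ((N : ℂ) ^ (k + r))⁻¹) • Mmat d (k+1) r) := by
      have h1 := hSumM.const_smul ((N:ℕ):ℂ)
      have h2 : (fun r : ℕ => ((N:ℕ):ℂ) • (((-1 : ℂ) ^ r * ((N : ℂ) ^ ((k+1) + r))⁻¹) • Mmat d (k+1) r))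
          = fun r : ℕ => ((-1 : ℂ) ^ r * ((N : ℂ) ^ (k + r))⁻¹) • Mmat d (k+1) r := by
        funext r
        rw [smul_smul]
        congr 1
        rw [show (k+1)+r = (k+r)+1 by ring, pow_succ]
        field_simp
      exact h2 ▸ h1
    have hsumD : Summable (fun r : ℕ =>
        ((-1 : ℂ) ^ r * ((N : ℂ) ^ (k + r))⁻¹) • Mmat d k r) := Summable.of_norm hSum_k
    have hsumAs : Summable (fun r : ℕ =>
        ((-1 : ℂ) ^ (r+1) * ((N : ℂ) ^ (k + (r+1)))⁻¹) • Mmat d (k+1) (r+1)) :=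
      (summable_nat_add_iff
        (f := fun r : ℕ => ((-1 : ℂ) ^ r * ((N : ℂ) ^ (k + r))⁻¹) • Mmat d (k+1) r) 1).2 hsumA
    have hsumDs : Summable (fun r : ℕ =>
        ((-1 : ℂ) ^ (r+1) * ((N : ℂ) ^ (k + (r+1)))⁻¹) • Mmat d k (r+1)) :=
      (summable_nat_add_iff
        (f := fun r : ℕ => ((-1 : ℂ) ^ r * ((N : ℂ) ^ (k + r))⁻¹) • Mmat d k r) 1).2 hsumD
    have hterm : ∀ r : ℕ,
        (((-1 : ℂ) ^ r * ((N : ℂ) ^ ((k+1) + r))⁻¹) • Mmat d (k+1) r) * (((N:ℕ):ℂ) • 1 + Jnat d k)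
          = ((((-1 : ℂ) ^ r * ((N : ℂ) ^ (k + r))⁻¹) • Mmat d (k+1) r)
              - (((-1 : ℂ) ^ (r+1) * ((N : ℂ) ^ (k + (r+1)))⁻¹) • Mmat d (k+1) (r+1)))
            + (((-1 : ℂ) ^ (r+1) * ((N : ℂ) ^ (k + (r+1)))⁻¹) • Mmat d k (r+1)) := by
      intro r
      have hMJ : Mmat d (k+1) r * Jnat d k = Mmat d (k+1) (r+1) - Mmat d k (r+1) := by
        rw [Mmat_succ d hk r]; abel
      rw [mul_add, mul_smul_comm, mul_one, smul_mul_assoc, hMJ, smul_sub, smul_smul]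
      have hc1 : ((N:ℕ):ℂ) * ((-1 : ℂ) ^ r * ((N : ℂ) ^ ((k+1) + r))⁻¹)
          = (-1 : ℂ) ^ r * ((N : ℂ) ^ (k + r))⁻¹ := by
        rw [show (k+1)+r = (k+r)+1 by ring, pow_succ]
        field_simp
      have hc2 : ((-1 : ℂ) ^ r * ((N : ℂ) ^ ((k+1) + r))⁻¹)
          = -((-1 : ℂ) ^ (r+1) * ((N : ℂ) ^ (k + (r+1)))⁻¹) := by
        rw [show (k+1)+r = k+(r+1) by ring, pow_succ (-1:ℂ)]
        ring
      rw [hc1, hc2, neg_smul, neg_smul]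
      abel
    have hkey : (∑' r : ℕ, ((-1 : ℂ) ^ r * ((N : ℂ) ^ ((k+1) + r))⁻¹) • Mmat d (k+1) r)
        * (((N:ℕ):ℂ) • 1 + Jnat d k)
        = ∑' r : ℕ, ((-1 : ℂ) ^ r * ((N : ℂ) ^ (k + r))⁻¹) • Mmat d k r := by
      rw [← Summable.tsum_mul_right _ hSumM]
      rw [tsum_congr hterm]
      rw [Summable.tsum_add (hsumA.sub hsumAs) hsumDs, Summable.tsum_sub hsumA hsumAs]
      have hshiftA := Summable.tsum_eq_zero_add hsumA
      have hshiftD := Summable.tsum_eq_zero_add hsumD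
      rw [hshiftA, hshiftD]
      simp only [Mmat_zero]
      abel
    refine ⟨hS1, ?_⟩
    have hFk : Fk d N (k+1) = (((N:ℕ):ℂ) • 1 + Jnat d k) * Fk d N k := rfl
    rw [hFk, ← mul_assoc, hkey, hId_k]

noncomputable def mc (r : ℕ) (π : Equiv.Perm (Fin d)) : ℕ :=
  Nat.card {τ : Fin r → Equiv.Perm (Fin d) //
    ((∀ i, (τ i).IsSwap) ∧ Monotone fun i => (τ i).support.max) ∧ (List.ofFn τ).prod = π}

lemma Mmat_entry (r : ℕ) (ρ σ : Equiv.Perm (Fin d)) :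
    Mmat d d r ρ σ = (mc d r (ρ⁻¹ * σ) : ℂ) := by
  classical
  rw [Mmat, Matrix.sum_apply]
  have h1 : ∀ τ ∈ Finset.univ.filter (fun τ : Fin r → Equiv.Perm (Fin d) => MonoBelow d d τ),
      Pmat d ((List.ofFn τ).prod) ρ σ = if ρ * (List.ofFn τ).prod = σ then (1:ℂ) else 0 :=
    fun τ _ => rfl
  rw [Finset.sum_congr rfl h1, Finset.sum_boole]
  have h2 : (Finset.univ.filter (fun τ : Fin r → Equiv.Perm (Fin d) => MonoBelow d d τ)).filter
      (fun τ => ρ * (List.ofFn τ).prod = σ)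
      = Finset.univ.filter (fun τ : Fin r → Equiv.Perm (Fin d) =>
          ((∀ i, (τ i).IsSwap) ∧ Monotone fun i => (τ i).support.max)
            ∧ (List.ofFn τ).prod = ρ⁻¹ * σ) := by
    rw [Finset.filter_filter]
    apply Finset.filter_congr
    intro τ _
    constructor
    · rintro ⟨hM, hp⟩
      refine ⟨⟨hM.1, hM.2.1⟩, ?_⟩
      rw [← hp]; group
    · rintro ⟨hM, hp⟩
      refine ⟨⟨hM.1, hM.2, fun i x _ => x.isLt⟩, ?_⟩
      rw [hp]; group
  rw [h2]
  congr 1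
  rw [mc, Nat.card_eq_fintype_card, Fintype.card_subtype]

lemma master (hd : 1 ≤ d) (hdN : d ≤ N) :
    IsUnit (Matrix.of fun ρ σ : Equiv.Perm (Fin d) =>
        (N : ℂ) ^ ((ρ⁻¹ * σ).partition.parts.card)) ∧
    ∀ ρ σ : Equiv.Perm (Fin d),
      (Summable fun r : ℕ => ‖(-1 : ℂ) ^ r * ((N : ℂ) ^ (d + r))⁻¹ * (mc d r (ρ⁻¹ * σ) : ℂ)‖) ∧
      HasSum (fun r : ℕ => (-1 : ℂ) ^ r * ((N : ℂ) ^ (d + r))⁻¹ * (mc d r (ρ⁻¹ * σ) : ℂ))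
        ((Matrix.of fun ρ σ : Equiv.Perm (Fin d) =>
          (N : ℂ) ^ ((ρ⁻¹ * σ).partition.parts.card))⁻¹ ρ σ) := by
  have hN : 0 < N := lt_of_lt_of_le hd hdN
  haveI : CompleteSpace (MA d) := FiniteDimensional.complete ℂ _
  obtain ⟨hSum, hId⟩ := main_induction d N hd hdN d le_rfl
  have hFk : Fk d N d = Matrix.of (fun ρ σ : Equiv.Perm (Fin d) =>
      (N : ℂ) ^ ((ρ⁻¹ * σ).partition.parts.card)) := Fk_top d N hN
  set G : MA d := Matrix.of (fun ρ σ : Equiv.Perm (Fin d) =>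
      (N : ℂ) ^ ((ρ⁻¹ * σ).partition.parts.card)) with hG_def
  set S : MA d := ∑' r : ℕ, ((-1 : ℂ) ^ r * ((N : ℂ) ^ (d + r))⁻¹) • Mmat d d r with hS_def
  have hleft : S * G = 1 := by rw [← hFk]; exact hId
  have hunit : IsUnit G := (Matrix.isUnit_iff_isUnit_det G).2 (Matrix.isUnit_det_of_left_inverse hleft)
  have hinv : G⁻¹ = S := Matrix.inv_eq_left_inv hleft
  refine ⟨hunit, fun ρ σ => ?_⟩
  have hentry : ∀ r : ℕ, (((-1 : ℂ) ^ r * ((N : ℂ) ^ (d + r))⁻¹) • Mmat d d r) ρ σ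
      = (-1 : ℂ) ^ r * ((N : ℂ) ^ (d + r))⁻¹ * (mc d r (ρ⁻¹ * σ) : ℂ) := by
    intro r
    rw [Matrix.smul_apply, Mmat_entry, smul_eq_mul]
  constructor
  · have hle : ∀ r : ℕ, ‖(-1 : ℂ) ^ r * ((N : ℂ) ^ (d + r))⁻¹ * (mc d r (ρ⁻¹ * σ) : ℂ)‖
        ≤ ‖((-1 : ℂ) ^ r * ((N : ℂ) ^ (d + r))⁻¹) • Mmat d d r‖ := by
      intro r
      rw [← hentry r]
      exact entry_norm_le d _ ρ σ
    exact Summable.of_nonneg_of_le (fun r => norm_nonneg _) hle hSum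
  · have hH : HasSum (fun r : ℕ => ((-1 : ℂ) ^ r * ((N : ℂ) ^ (d + r))⁻¹) • Mmat d d r) S :=
      (Summable.of_norm hSum).hasSum
    let L : MA d →ₗ[ℂ] ℂ :=
      { toFun := fun A => A ρ σ, map_add' := fun _ _ => rfl, map_smul' := fun _ _ => rfl }
    let Lc : MA d →L[ℂ] ℂ := LinearMap.toContinuousLinearMap L
    have hH2 := Lc.hasSum hH
    have hfun : (fun r : ℕ => Lc (((-1 : ℂ) ^ r * ((N : ℂ) ^ (d + r))⁻¹) • Mmat d d r))
        = fun r : ℕ => (-1 : ℂ) ^ r * ((N : ℂ) ^ (d + r))⁻¹ * (mc d r (ρ⁻¹ * σ) : ℂ) := by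
      funext r
      show (((-1 : ℂ) ^ r * ((N : ℂ) ^ (d + r))⁻¹) • Mmat d d r) ρ σ = _
      exact hentry r
    rw [hfun] at hH2
    have hval : Lc S = G⁻¹ ρ σ := by rw [hinv]; rfl
    rw [hval] at hH2
    exact hH2

end Analysis

end HCIZW

/-- For `1 ≤ d ≤ N` the Gram matrix `[N^{c(ρ⁻¹σ)}]` is invertible and the entries
of its inverse are the absolutely convergent series
`∑_r (-1)^r N^{-d-r} m_r(ρ⁻¹σ)`. -/
theorem weingarten_inverse (d N : ℕ) (hd : 1 ≤ d) (hdN : d ≤ N) :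
    IsUnit (gramMatrix d N) ∧
    ∀ ρ σ : Equiv.Perm (Fin d),
      (Summable fun r : ℕ =>
        ‖(-1 : ℂ) ^ r * ((N : ℂ) ^ (d + r))⁻¹ * (mcount d r (ρ⁻¹ * σ) : ℂ)‖) ∧
      HasSum (fun r : ℕ =>
          (-1 : ℂ) ^ r * ((N : ℂ) ^ (d + r))⁻¹ * (mcount d r (ρ⁻¹ * σ) : ℂ))
        ((gramMatrix d N)⁻¹ ρ σ) := by
  exact HCIZW.master d N hd hdN

end HCIZ
end

section
/- Let d ≥ 1 and let q ∈ ℂ be such that 1 + q·c ≠ 0 for every integer c with 1 ≤ |c| ≤ d−1 (equivalently, q is not one of the points ±1/1, ±1/2, …, ±1/(d−1)). Then the d!×d! complex matrix with rows and columns indexed by permutations of {1,…,d} and entries q^{d−c(ρ⁻¹σ)} is invertible, where c(π) denotes the number of cycles of π and the convention 0^0 = 1 is used. -/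
open MeasureTheory Matrix

namespace HCIZ

section QDM
open Equiv Equiv.Perm

variable {d : ℕ}

lemma cycleCount_def (σ : Equiv.Perm (Fin d)) :
    cycleCount σ = σ.cycleType.card + (d - σ.support.card) := by
  unfold cycleCount
  rw [Equiv.Perm.parts_partition]
  simp [Fintype.card_fin]

lemma cycleType_card_le (σ : Equiv.Perm (Fin d)) : σ.cycleType.card ≤ σ.support.card := by
  have h := Multiset.card_nsmul_le_sum (s := σ.cycleType) (a := 1)
    (fun x hx => (Equiv.Perm.one_lt_of_mem_cycleType hx).le)
  rw [Equiv.Perm.sum_cycleType] at h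
  simpa using h

lemma cycleCount_le (σ : Equiv.Perm (Fin d)) : cycleCount σ ≤ d := by
  have h1 := cycleType_card_le σ
  have h2 : σ.support.card ≤ d := by
    simpa [Fintype.card_fin] using σ.support.card_le_univ
  rw [cycleCount_def]; omega

lemma cycleCount_one : cycleCount (1 : Equiv.Perm (Fin d)) = d := by
  rw [cycleCount_def]; simp

end QDM
section QDM2
open Equiv Equiv.Perm

lemma cycle_ext {α : Type*} [Fintype α] [DecidableEq α] {c : Equiv.Perm α} (hc : c.IsCycle)
    {a b : α} (ha : a ∈ c.support) (hb : b ∉ c.support) :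
    (c * Equiv.swap a b).IsCycle ∧ (c * Equiv.swap a b).support = insert b c.support := by
  have hab : a ≠ b := fun h => hb (h ▸ ha)
  have hca : c a ≠ a := mem_support.1 ha
  have hcb : c b = b := notMem_support.1 hb
  set π := c * Equiv.swap a b with hπ
  have hπb : π b = c a := by simp [hπ, Equiv.Perm.mul_apply, Equiv.swap_apply_right]
  have hπa : π a = b := by simp [hπ, Equiv.Perm.mul_apply, Equiv.swap_apply_left, hcb]
  have hπother : ∀ y, y ≠ a → y ≠ b → π y = c y := by
    intro y hya hyb
    simp [hπ, Equiv.Perm.mul_apply, Equiv.swap_apply_of_ne_of_ne hya hyb]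
  have hcab : c a ≠ b := fun h => hb (h ▸ (apply_mem_support.2 ha))
  have hsupp : π.support = insert b c.support := by
    ext y
    rcases eq_or_ne y b with rfl | hyb
    · simp [mem_support, hπb, hcab]
    rcases eq_or_ne y a with rfl | hya
    · simp [mem_support, hπa, Ne.symm hab, ha]
    · simp [mem_support, hπother y hya hyb, hyb]
  have key : ∀ j : ℕ, ∃ n : ℕ, (π ^ n) b = (c ^ j) (c a) := by
    intro j
    induction j with
    | zero => exact ⟨1, by simpa using hπb⟩
    | succ j ih =>
      obtain ⟨n, hn⟩ := ih
      have hy : (c ^ j) (c a) ∈ c.support := pow_apply_mem_support.2 (apply_mem_support.2 ha)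
      have hyb : (c ^ j) (c a) ≠ b := fun h => hb (h ▸ hy)
      have hstep : (c ^ (j + 1)) (c a) = c ((c ^ j) (c a)) := by
        rw [pow_succ' c j]; simp [Equiv.Perm.mul_apply]
      rcases eq_or_ne ((c ^ j) (c a)) a with hya | hya
      · exact ⟨1, by simp [hπb, hstep, hya]⟩
      · refine ⟨n + 1, ?_⟩
        rw [pow_succ' π n]
        simp only [Equiv.Perm.mul_apply, hn]
        rw [hπother _ hya hyb, hstep]
  have hsc : ∀ y ∈ π.support, π.SameCycle b y := by
    intro y hy
    rw [hsupp] at hy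
    rcases Finset.mem_insert.1 hy with rfl | hy
    · exact Equiv.Perm.SameCycle.refl _ _
    rcases eq_or_ne y a with rfl | hya
    · exact ⟨-1, by simp [_root_.zpow_neg_one]; rw [Equiv.symm_apply_eq]; exact hπa.symm⟩
    · have hsc : c.SameCycle a y := hc.sameCycle (mem_support.1 ha) (mem_support.1 hy)
      obtain ⟨i, hi0, _, hiy⟩ := hsc.exists_pow_eq c
      obtain ⟨j, rfl⟩ : ∃ j, i = j + 1 := ⟨i - 1, by omega⟩
      have : (c ^ (j + 1)) a = (c ^ j) (c a) := by
        rw [pow_succ c j]; simp [Equiv.Perm.mul_apply]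
      obtain ⟨n, hn⟩ := key j
      exact ⟨(n : ℤ), by rw [zpow_natCast, hn, ← this, hiy]⟩
  have hcyc : π.IsCycle := by
    refine ⟨b, ?_, ?_⟩
    · rw [hπb]; exact hcab
    · intro y hy
      exact hsc y (mem_support.2 hy)
  exact ⟨hcyc, hsupp⟩

end QDM2
section QDM3
open Equiv Equiv.Perm

lemma perm_apply_inv_self' {α : Type*} (f : Equiv.Perm α) (x : α) : f (f⁻¹ x) = x :=
  Equiv.apply_symm_apply f x

lemma perm_inv_apply_self' {α : Type*} (f : Equiv.Perm α) (x : α) : f⁻¹ (f x) = x :=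
  Equiv.symm_apply_apply f x

lemma cycleCount_mul_swap {d : ℕ} (σ : Equiv.Perm (Fin d)) {a b : Fin d} (hab : a ≠ b)
    (hb : σ b = b) : cycleCount (σ * Equiv.swap a b) + 1 = cycleCount σ := by
  classical
  by_cases ha : σ a = a
  · -- disjoint case
    have hdisj : Equiv.Perm.Disjoint σ (Equiv.swap a b) := by
      intro x
      rcases eq_or_ne x a with rfl | hxa
      · exact Or.inl ha
      rcases eq_or_ne x b with rfl | hxb
      · exact Or.inl hb
      · exact Or.inr (Equiv.swap_apply_of_ne_of_ne hxa hxb)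
    have hct : (σ * Equiv.swap a b).cycleType = σ.cycleType + (Equiv.swap a b).cycleType :=
      hdisj.cycleType_mul
    have hctsw : (Equiv.swap a b).cycleType = {2} := by
      rw [(Equiv.Perm.isCycle_swap hab).cycleType, Equiv.Perm.card_support_swap hab]
    have hsupp : (σ * Equiv.swap a b).support = σ.support ∪ (Equiv.swap a b).support :=
      hdisj.support_mul
    have hcard : (σ * Equiv.swap a b).support.card = σ.support.card + 2 := by
      rw [hsupp, Finset.card_union_of_disjoint (Equiv.Perm.disjoint_iff_disjoint_support.1 hdisj),
        Equiv.Perm.card_support_swap hab]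
    have hle : (σ * Equiv.swap a b).support.card ≤ d := by
      simpa [Fintype.card_fin] using (σ * Equiv.swap a b).support.card_le_univ
    have h1 := cycleType_card_le σ
    rw [cycleCount_def, cycleCount_def, hct, hctsw, hcard]
    simp only [Multiset.card_add, Multiset.card_singleton]
    omega
  · -- merge case
    set c := σ.cycleOf a with hc
    have hcyc : c.IsCycle := Equiv.Perm.isCycle_cycleOf σ ha
    have ha_supp : a ∈ c.support := by
      rw [hc, Equiv.Perm.mem_support_cycleOf_iff]
      exact ⟨Equiv.Perm.SameCycle.refl _ _, Equiv.Perm.mem_support.2 ha⟩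
    have hb_supp : b ∉ c.support := fun h =>
      (Equiv.Perm.mem_support.1 (Equiv.Perm.support_cycleOf_le σ a h)) hb
    set ρ := c⁻¹ * σ with hρ
    have hσ : σ = c * ρ := by rw [hρ]; group
    have hdisj : Equiv.Perm.Disjoint c ρ := by
      intro x
      by_cases hx : σ.SameCycle a x
      · right
        have : c x = σ x := Equiv.Perm.cycleOf_apply σ a x ▸ (if_pos hx)
        rw [hρ]
        simp only [Equiv.Perm.mul_apply]
        rw [← this, perm_inv_apply_self']
      · left
        exact Equiv.Perm.cycleOf_apply_of_not_sameCycle hx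
    have hsuppσ : σ.support = c.support ∪ ρ.support := by
      rw [hσ]; exact hdisj.support_mul
    have hdisj_supp : _root_.Disjoint c.support ρ.support :=
      Equiv.Perm.disjoint_iff_disjoint_support.1 hdisj
    have haρ : a ∉ ρ.support := fun h => (Finset.disjoint_left.1 hdisj_supp ha_supp) h
    have hbρ : b ∉ ρ.support := fun h =>
      (Equiv.Perm.mem_support.1 (hsuppσ ▸ Finset.mem_union_right _ h)) hb
    have hdisj2 : Equiv.Perm.Disjoint ρ (Equiv.swap a b) := by
      intro x
      rcases eq_or_ne x a with rfl | hxa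
      · exact Or.inl (Equiv.Perm.notMem_support.1 haρ)
      rcases eq_or_ne x b with rfl | hxb
      · exact Or.inl (Equiv.Perm.notMem_support.1 hbρ)
      · exact Or.inr (Equiv.swap_apply_of_ne_of_ne hxa hxb)
    obtain ⟨hcyc', hsupp'⟩ := cycle_ext hcyc ha_supp hb_supp
    have hfact : σ * Equiv.swap a b = (c * Equiv.swap a b) * ρ := by
      rw [hσ, mul_assoc, hdisj2.commute.eq, ← mul_assoc]
    have hdisj3 : Equiv.Perm.Disjoint (c * Equiv.swap a b) ρ := by
      rw [Equiv.Perm.disjoint_iff_disjoint_support, hsupp']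
      rw [Finset.disjoint_insert_left]
      exact ⟨hbρ, hdisj_supp⟩
    have hcardc' : (c * Equiv.swap a b).support.card = c.support.card + 1 := by
      rw [hsupp', Finset.card_insert_of_notMem hb_supp]
    -- cycle types
    have hctσ : σ.cycleType = {c.support.card} + ρ.cycleType := by
      rw [hσ, hdisj.cycleType_mul, hcyc.cycleType]
    have hctπ : (σ * Equiv.swap a b).cycleType
        = {(c * Equiv.swap a b).support.card} + ρ.cycleType := by
      rw [hfact, hdisj3.cycleType_mul, hcyc'.cycleType]
    -- support cards
    have hcardσ : σ.support.card = c.support.card + ρ.support.card := by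
      rw [hsuppσ, Finset.card_union_of_disjoint hdisj_supp]
    have hcardπ : (σ * Equiv.swap a b).support.card
        = c.support.card + 1 + ρ.support.card := by
      rw [hfact, hdisj3.support_mul,
        Finset.card_union_of_disjoint (Equiv.Perm.disjoint_iff_disjoint_support.1 hdisj3),
        hcardc']
    have hle : (σ * Equiv.swap a b).support.card ≤ d := by
      simpa [Fintype.card_fin] using (σ * Equiv.swap a b).support.card_le_univ
    rw [cycleCount_def, cycleCount_def, hctσ, hctπ, hcardc', hcardσ, hcardπ]
    simp only [Multiset.card_add, Multiset.card_singleton]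
    omega

end QDM3
section QDM4
open Equiv Equiv.Perm

variable {d : ℕ}

/-- Permutation matrix of right translation. -/
noncomputable def Pm (g : Equiv.Perm (Fin d)) :
    Matrix (Equiv.Perm (Fin d)) (Equiv.Perm (Fin d)) ℂ :=
  Matrix.of fun ρ σ => if σ = ρ * g then 1 else 0

lemma Pm_mul (g h : Equiv.Perm (Fin d)) : Pm g * Pm h = Pm (g * h) := by
  ext ρ τ
  simp only [Pm, Matrix.mul_apply, Matrix.of_apply]
  rw [Finset.sum_eq_single (ρ * g)]
  · simp [mul_assoc]
  · intro σ _ hσ; simp [hσ]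
  · intro h; exact absurd (Finset.mem_univ _) h

lemma Pm_one : Pm (1 : Equiv.Perm (Fin d)) = 1 := by
  ext ρ σ
  simp only [Pm, Matrix.of_apply, Matrix.one_apply, mul_one]
  by_cases h : σ = ρ
  · simp [h]
  · simp [h, Ne.symm h]

lemma swap_id1 {α : Type*} [DecidableEq α] {a j k : α} (h1 : a ≠ j) (h2 : a ≠ k) (h3 : j ≠ k) :
    Equiv.swap a j * Equiv.swap j k = Equiv.swap a k * Equiv.swap a j := by
  ext x
  simp only [Equiv.Perm.mul_apply, Equiv.swap_apply_def]
  split_ifs <;> simp_all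

lemma swap_id2 {α : Type*} [DecidableEq α] {a j k : α} (h1 : a ≠ j) (h2 : a ≠ k) (h3 : j ≠ k) :
    Equiv.swap a j * Equiv.swap a k = Equiv.swap j k * Equiv.swap a j := by
  ext x
  simp only [Equiv.Perm.mul_apply, Equiv.swap_apply_def]
  split_ifs <;> simp_all

lemma swap_id3 {α : Type*} [DecidableEq α] {i j k : α} (h1 : i ≠ j) (h2 : i ≠ k) (h3 : j ≠ k) :
    Equiv.swap j k * Equiv.swap i k = Equiv.swap i j * Equiv.swap j k := by
  ext x
  simp only [Equiv.Perm.mul_apply, Equiv.swap_apply_def]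
  split_ifs <;> simp_all

lemma swap_comm' {α : Type*} [DecidableEq α] {a j b k : α} (h1 : b ≠ a) (h2 : b ≠ j)
    (h3 : k ≠ a) (h4 : k ≠ j) :
    Equiv.swap a j * Equiv.swap b k = Equiv.swap b k * Equiv.swap a j := by
  ext x
  simp only [Equiv.Perm.mul_apply, Equiv.swap_apply_def]
  split_ifs <;> simp_all

/-- The Jucys–Murphy matrix. -/
noncomputable def Jm (k : Fin d) : Matrix (Equiv.Perm (Fin d)) (Equiv.Perm (Fin d)) ℂ :=
  ∑ i ∈ Finset.Iio k, Pm (Equiv.swap i k)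

lemma Iio_succ_fin {j k : Fin d} (hjk : (j : ℕ) + 1 = (k : ℕ)) :
    Finset.Iio k = insert j (Finset.Iio j) := by
  ext x
  simp only [Finset.mem_Iio, Finset.mem_insert, Fin.lt_def]
  constructor
  · intro h
    rcases eq_or_ne (x : ℕ) (j : ℕ) with h' | h'
    · left; exact Fin.ext h'
    · right; omega
  · rintro (rfl | h) <;> omega

lemma Sm_mul_Jm {j k : Fin d} (hjk : (j : ℕ) + 1 = (k : ℕ)) :
    Pm (Equiv.swap j k) * Jm k = Jm j * Pm (Equiv.swap j k) + 1 := by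
  have hjk' : j ≠ k := fun h => by rw [h] at hjk; omega
  rw [Jm, Finset.mul_sum, Iio_succ_fin hjk, Finset.sum_insert (by simp)]
  have h1 : Pm (Equiv.swap j k) * Pm (Equiv.swap j k) = 1 := by
    rw [Pm_mul, Equiv.swap_mul_self, Pm_one]
  rw [h1]
  have h2 : ∀ i ∈ Finset.Iio j, Pm (Equiv.swap j k) * Pm (Equiv.swap i k)
      = Pm (Equiv.swap i j) * Pm (Equiv.swap j k) := by
    intro i hi
    have hij : i ≠ j := ne_of_lt (Finset.mem_Iio.1 hi)
    have hik : i ≠ k := by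
      have := Finset.mem_Iio.1 hi
      rw [Fin.lt_def] at this
      intro h; rw [h] at this; omega
    rw [Pm_mul, Pm_mul, swap_id3 hij hik hjk']
  rw [Finset.sum_congr rfl h2, Jm, Finset.sum_mul]
  abel

lemma Jm_comm {j k : Fin d} (hjk : (j : ℕ) + 1 = (k : ℕ)) :
    Jm j * Jm k = Jm k * Jm j := by
  have hjk' : j ≠ k := fun h => by rw [h] at hjk; omega
  have hmem : ∀ a : Fin d, a ∈ Finset.Iio j → a ≠ j ∧ a ≠ k := by
    intro a ha
    have h := Finset.mem_Iio.1 ha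
    rw [Fin.lt_def] at h
    constructor
    · exact fun e => by rw [e] at h; omega
    · exact fun e => by rw [e] at h; omega
  rw [Jm, Jm]
  simp only [Finset.sum_mul, Finset.mul_sum]
  rw [Finset.sum_comm (s := Finset.Iio k) (t := Finset.Iio j)]
  refine Finset.sum_congr rfl (fun a ha => ?_)
  obtain ⟨haj, hak⟩ := hmem a ha
  have haIiok : a ∈ Finset.Iio k := by
    rw [Finset.mem_Iio, Fin.lt_def]
    have := Finset.mem_Iio.1 ha; rw [Fin.lt_def] at this; omega
  have hjIiok : j ∈ Finset.Iio k := by rw [Finset.mem_Iio, Fin.lt_def]; omega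
  have splitL : ∑ x ∈ Finset.Iio k, Pm (Equiv.swap a j) * Pm (Equiv.swap x k)
      = Pm (Equiv.swap a j) * Pm (Equiv.swap j k) + (Pm (Equiv.swap a j) * Pm (Equiv.swap a k)
        + ∑ x ∈ (Finset.Iio j).erase a, Pm (Equiv.swap a j) * Pm (Equiv.swap x k)) := by
    rw [Iio_succ_fin hjk, Finset.sum_insert (by simp), ← Finset.add_sum_erase _ _ ha]
  have splitR : ∑ x ∈ Finset.Iio k, Pm (Equiv.swap x k) * Pm (Equiv.swap a j)
      = Pm (Equiv.swap j k) * Pm (Equiv.swap a j) + (Pm (Equiv.swap a k) * Pm (Equiv.swap a j)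
        + ∑ x ∈ (Finset.Iio j).erase a, Pm (Equiv.swap x k) * Pm (Equiv.swap a j)) := by
    rw [Iio_succ_fin hjk, Finset.sum_insert (by simp), ← Finset.add_sum_erase _ _ ha]
  rw [splitL, splitR]
  have e1 : Pm (Equiv.swap a j) * Pm (Equiv.swap j k)
      = Pm (Equiv.swap a k) * Pm (Equiv.swap a j) := by
    rw [Pm_mul, Pm_mul, swap_id1 haj hak hjk']
  have e2 : Pm (Equiv.swap a j) * Pm (Equiv.swap a k)
      = Pm (Equiv.swap j k) * Pm (Equiv.swap a j) := by
    rw [Pm_mul, Pm_mul, swap_id2 haj hak hjk']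
  have e3 : ∀ b ∈ (Finset.Iio j).erase a, Pm (Equiv.swap a j) * Pm (Equiv.swap b k)
      = Pm (Equiv.swap b k) * Pm (Equiv.swap a j) := by
    intro b hb
    obtain ⟨hba, hbIio⟩ := Finset.mem_erase.1 hb
    obtain ⟨hbj, hbk⟩ := hmem b hbIio
    rw [Pm_mul, Pm_mul, swap_comm' hba hbj (Ne.symm hak) (Ne.symm hjk')]
  rw [Finset.sum_congr rfl e3, e1, e2]
  abel

end QDM4
section QDM5
open Equiv Equiv.Perm

variable {d : ℕ}

/-- Permutations fixing all points with index `≥ m`. -/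
def stab (d m : ℕ) : Finset (Equiv.Perm (Fin d)) :=
  Finset.univ.filter fun π => ∀ j : Fin d, m ≤ (j : ℕ) → π j = j

lemma mem_stab {m : ℕ} {π : Equiv.Perm (Fin d)} :
    π ∈ stab d m ↔ ∀ j : Fin d, m ≤ (j : ℕ) → π j = j := by
  simp [stab]

/-- Partial products of `1 + q • Jm k`. -/
noncomputable def PP (d : ℕ) (q : ℂ) : ℕ → Matrix (Equiv.Perm (Fin d)) (Equiv.Perm (Fin d)) ℂ
  | 0 => 1
  | (m + 1) => PP d q m * (if h : m < d then 1 + q • Jm ⟨m, h⟩ else 1)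

lemma stab_zero : stab d 0 = {1} := by
  ext π
  simp only [mem_stab, Finset.mem_singleton]
  constructor
  · intro h
    exact Equiv.ext fun j => h j (Nat.zero_le _)
  · rintro rfl j _; rfl

lemma stab_filter_eq {m : ℕ} (hm : m < d) :
    stab d m = (stab d (m + 1)).filter (fun π => π ⟨m, hm⟩ = ⟨m, hm⟩) := by
  ext π
  simp only [mem_stab, Finset.mem_filter, mem_stab]
  constructor
  · intro h
    exact ⟨fun j hj => h j (by omega), h ⟨m, hm⟩ (le_refl m)⟩
  · rintro ⟨h1, h2⟩ j hj
    rcases eq_or_lt_of_le hj with he | hlt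
    · have : j = (⟨m, hm⟩ : Fin d) := Fin.ext he.symm
      rw [this]; exact h2
    · exact h1 j hlt

end QDM5
section QDM6
open Equiv Equiv.Perm

variable {d : ℕ}

lemma stab_mul_swap_mem {m : ℕ} (hm : m < d) {σ : Equiv.Perm (Fin d)} {i : Fin d}
    (hσ : σ ∈ stab d m) (hi : i < (⟨m, hm⟩ : Fin d)) :
    σ * Equiv.swap i ⟨m, hm⟩ ∈ stab d (m + 1) ∧
      (σ * Equiv.swap i ⟨m, hm⟩) ⟨m, hm⟩ ≠ ⟨m, hm⟩ := by
  have hσm : σ ⟨m, hm⟩ = ⟨m, hm⟩ := mem_stab.1 hσ _ (le_refl m)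
  have hi' : (i : ℕ) < m := hi
  constructor
  · rw [mem_stab]
    intro j hj
    have hji : j ≠ i := by intro h; rw [h] at hj; omega
    have hjm : j ≠ ⟨m, hm⟩ := by intro h; rw [h] at hj; simp at hj
    rw [Equiv.Perm.mul_apply, Equiv.swap_apply_of_ne_of_ne hji hjm]
    exact mem_stab.1 hσ j (by omega)
  · rw [Equiv.Perm.mul_apply, Equiv.swap_apply_right]
    intro h
    have : i = (⟨m, hm⟩ : Fin d) := σ.injective (h.trans hσm.symm)
    rw [this] at hi'; simp at hi'
end QDM6
section QDM7
open Equiv Equiv.Perm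

variable {d : ℕ}

lemma stab_inv_mem {m : ℕ} (hm : m < d) {π : Equiv.Perm (Fin d)}
    (hπ : π ∈ stab d (m + 1)) (hπm : π ⟨m, hm⟩ ≠ ⟨m, hm⟩) :
    π * Equiv.swap (π⁻¹ ⟨m, hm⟩) ⟨m, hm⟩ ∈ stab d m ∧
      (π⁻¹ ⟨m, hm⟩ : Fin d) < ⟨m, hm⟩ := by
  have hval : ((⟨m, hm⟩ : Fin d) : ℕ) = m := rfl
  have hinm : π⁻¹ ⟨m, hm⟩ ≠ ⟨m, hm⟩ := by
    intro h
    exact hπm (((perm_apply_inv_self' π ⟨m, hm⟩).symm.trans (congrArg π h)).symm)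
  have hlt : (π⁻¹ ⟨m, hm⟩ : Fin d) < ⟨m, hm⟩ := by
    rw [Fin.lt_def]
    by_contra hge
    push_neg at hge
    have h1 : (m : ℕ) + 1 ≤ ((π⁻¹ ⟨m, hm⟩ : Fin d) : ℕ) := by
      rcases Nat.lt_or_ge ((π⁻¹ ⟨m, hm⟩ : Fin d) : ℕ) (m + 1) with h | h
      · exfalso; exact hinm (Fin.ext (by omega))
      · exact h
    have := mem_stab.1 hπ _ h1
    exact hinm (by rw [← this, perm_apply_inv_self'])
  refine ⟨?_, hlt⟩
  rw [mem_stab]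
  intro j hj
  rcases eq_or_lt_of_le hj with he | hlt'
  · have hje : j = (⟨m, hm⟩ : Fin d) := Fin.ext he.symm
    subst hje
    rw [Equiv.Perm.mul_apply, Equiv.swap_apply_right, perm_apply_inv_self']
  · have hji : j ≠ π⁻¹ ⟨m, hm⟩ := by
      intro h
      rw [h] at hlt'
      have := Fin.lt_def.1 hlt
      omega
    have hjm : j ≠ ⟨m, hm⟩ := by
      intro h; rw [h] at hlt'; exact absurd hlt' (by simp)
    rw [Equiv.Perm.mul_apply, Equiv.swap_apply_of_ne_of_ne hji hjm]
    exact mem_stab.1 hπ j hlt'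

lemma PP_eq (q : ℂ) : ∀ m, m ≤ d →
    PP d q m = ∑ π ∈ stab d m, q ^ (d - cycleCount π) • Pm π := by
  intro m
  induction m with
  | zero =>
    intro _
    rw [PP, stab_zero, Finset.sum_singleton, cycleCount_one]
    simp [Pm_one]
  | succ m ih =>
    intro hm1
    have hm : m < d := hm1
    rw [PP, dif_pos hm, ih (le_of_lt hm), mul_add, mul_one, Finset.sum_mul]
    have hexp : ∀ σ ∈ stab d m,
        (q ^ (d - cycleCount σ) • Pm σ) * (q • Jm ⟨m, hm⟩)
          = ∑ i ∈ Finset.Iio (⟨m, hm⟩ : Fin d),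
              q ^ (d - cycleCount (σ * Equiv.swap i ⟨m, hm⟩)) • Pm (σ * Equiv.swap i ⟨m, hm⟩) := by
      intro σ hσ
      have hσm : σ ⟨m, hm⟩ = ⟨m, hm⟩ := mem_stab.1 hσ _ (le_refl m)
      rw [Jm, Finset.smul_sum, Finset.mul_sum]
      refine Finset.sum_congr rfl fun i hi => ?_
      have him : i ≠ ⟨m, hm⟩ := ne_of_lt (Finset.mem_Iio.1 hi)
      have hcc : cycleCount (σ * Equiv.swap i ⟨m, hm⟩) + 1 = cycleCount σ :=
        cycleCount_mul_swap σ him hσm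
      have hccle := cycleCount_le (d := d) σ
      have hccd : d - cycleCount (σ * Equiv.swap i ⟨m, hm⟩) = (d - cycleCount σ) + 1 := by
        have h1 : 1 ≤ cycleCount σ := by omega
        omega
      rw [smul_mul_assoc, mul_smul_comm, smul_smul, Pm_mul, hccd, pow_succ]
    rw [Finset.sum_congr rfl hexp]
    rw [← Finset.sum_filter_add_sum_filter_not (stab d (m + 1))
      (fun π => π ⟨m, hm⟩ = ⟨m, hm⟩) (fun π => q ^ (d - cycleCount π) • Pm π),
      ← stab_filter_eq hm]
    congr 1
    rw [← Finset.sum_product']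
    refine Finset.sum_bij' (fun p _ => p.1 * Equiv.swap p.2 ⟨m, hm⟩)
      (fun π _ => (π * Equiv.swap (π⁻¹ ⟨m, hm⟩) ⟨m, hm⟩, π⁻¹ ⟨m, hm⟩)) ?_ ?_ ?_ ?_ ?_
    · rintro ⟨σ, i⟩ hp
      rw [Finset.mem_product] at hp
      obtain ⟨h1, h2⟩ := stab_mul_swap_mem hm hp.1 (Finset.mem_Iio.1 hp.2)
      simp only [Finset.mem_filter]
      exact ⟨h1, h2⟩
    · intro π hπ
      rw [Finset.mem_filter] at hπ
      obtain ⟨h1, h2⟩ := stab_inv_mem hm hπ.1 hπ.2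
      rw [Finset.mem_product]
      exact ⟨h1, Finset.mem_Iio.2 h2⟩
    · rintro ⟨σ, i⟩ hp
      rw [Finset.mem_product] at hp
      have hσm : σ ⟨m, hm⟩ = ⟨m, hm⟩ := mem_stab.1 hp.1 _ (le_refl m)
      have hkey : (σ * Equiv.swap i ⟨m, hm⟩)⁻¹ ⟨m, hm⟩ = i := by
        rw [_root_.mul_inv_rev, Equiv.Perm.mul_apply]
        have : σ⁻¹ ⟨m, hm⟩ = ⟨m, hm⟩ :=
          σ.injective (by rw [perm_apply_inv_self', hσm])
        rw [this, Equiv.swap_inv, Equiv.swap_apply_right]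
      ext : 1
      · show σ * Equiv.swap i ⟨m, hm⟩ * Equiv.swap _ ⟨m, hm⟩ = σ
        rw [hkey, mul_assoc, Equiv.swap_mul_self, mul_one]
      · show (σ * Equiv.swap i ⟨m, hm⟩)⁻¹ ⟨m, hm⟩ = i
        exact hkey
    · intro π hπ
      show π * Equiv.swap (π⁻¹ ⟨m, hm⟩) ⟨m, hm⟩ * Equiv.swap _ ⟨m, hm⟩ = π
      rw [mul_assoc, Equiv.swap_mul_self, mul_one]
    · rintro ⟨σ, i⟩ hp
      rfl

end QDM7
section QDM8
open Equiv Module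

variable {d : ℕ}

noncomputable def TJ (k : Fin d) : Module.End ℂ (Equiv.Perm (Fin d) → ℂ) :=
  Matrix.toLinAlgEquiv' (Jm k)

noncomputable def TS (j k : Fin d) : Module.End ℂ (Equiv.Perm (Fin d) → ℂ) :=
  Matrix.toLinAlgEquiv' (Pm (Equiv.swap j k))

lemma TS_sq (j k : Fin d) : TS j k * TS j k = 1 := by
  rw [TS, ← _root_.map_mul, Pm_mul, Equiv.swap_mul_self, Pm_one, _root_.map_one]

lemma TS_TJ {j k : Fin d} (hjk : (j : ℕ) + 1 = (k : ℕ)) :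
    TS j k * TJ k = TJ j * TS j k + 1 := by
  rw [TS, TJ, TJ, ← _root_.map_mul, ← _root_.map_mul, Sm_mul_Jm hjk, _root_.map_add, _root_.map_one]

lemma TJ_comm' {j k : Fin d} (hjk : (j : ℕ) + 1 = (k : ℕ)) :
    TJ j * TJ k = TJ k * TJ j := by
  rw [TJ, TJ, ← _root_.map_mul, ← _root_.map_mul, Jm_comm hjk]

lemma TJ_eigenvalue_int : ∀ n : ℕ, ∀ k : Fin d, (k : ℕ) = n → ∀ μ : ℂ,
    (TJ k).HasEigenvalue μ → ∃ c : ℤ, μ = (c : ℂ) ∧ c.natAbs ≤ n := by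
  intro n
  induction n with
  | zero =>
    intro k hk μ hμ
    have hJ : Jm k = 0 := by
      rw [Jm]
      have he : Finset.Iio k = ∅ := by
        ext x; simp [Finset.mem_Iio, Fin.lt_def, hk]
      rw [he, Finset.sum_empty]
    have hT : TJ k = 0 := by rw [TJ, hJ, _root_.map_zero]
    obtain ⟨v, hv⟩ := hμ.exists_hasEigenvector
    have h0 : (0 : Equiv.Perm (Fin d) → ℂ) = μ • v := by
      rw [← hv.apply_eq_smul, hT]; rfl
    refine ⟨0, ?_, by simp⟩
    rcases smul_eq_zero.1 h0.symm with h | h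
    · simp [h]
    · exact absurd h hv.2
  | succ n ih =>
    intro k hk μ hμ
    have hn : n < d := by have := k.isLt; omega
    set j : Fin d := ⟨n, hn⟩ with hj
    have hjk : (j : ℕ) + 1 = (k : ℕ) := by simp [hj, hk]
    have hjn : (j : ℕ) = n := rfl
    set E := (TJ k).eigenspace μ with hE
    have hmap : ∀ x ∈ E, TJ j x ∈ E := by
      intro x hx
      rw [hE, Module.End.mem_eigenspace_iff] at hx ⊢
      have hc := congrArg (fun f => f x) (TJ_comm' hjk)
      simp only [Module.End.mul_apply] at hc
      rw [← hc, hx, _root_.map_smul]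
    have hnt : Nontrivial E := Submodule.nontrivial_iff_ne_bot.2 hμ
    obtain ⟨b, hb⟩ := Module.End.exists_eigenvalue ((TJ j).restrict hmap)
    obtain ⟨v, hv⟩ := hb.exists_hasEigenvector
    have hvne : (v : Equiv.Perm (Fin d) → ℂ) ≠ 0 := by
      simpa [Submodule.coe_eq_zero] using hv.2
    have hTjv : TJ j (v : Equiv.Perm (Fin d) → ℂ) = b • (v : Equiv.Perm (Fin d) → ℂ) := by
      have h := congrArg (Subtype.val) hv.apply_eq_smul
      simpa [LinearMap.restrict_apply] using h
    have hTkv : TJ k (v : Equiv.Perm (Fin d) → ℂ) = μ • (v : Equiv.Perm (Fin d) → ℂ) :=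
      Module.End.mem_eigenspace_iff.1 v.2
    have hbμ : (TJ j).HasEigenvalue b :=
      Module.End.hasEigenvalue_of_hasEigenvector ⟨Module.End.mem_eigenspace_iff.2 hTjv, hvne⟩
    obtain ⟨cb, hcb, hcble⟩ := ih j hjn b hbμ
    by_cases ha : (TJ j).HasEigenvalue μ
    · obtain ⟨c, hc, hcle⟩ := ih j hjn μ ha
      exact ⟨c, hc, by omega⟩
    · have hne : μ ≠ b := fun h => ha (h ▸ hbμ)
      set w := TS j k (v : Equiv.Perm (Fin d) → ℂ) with hwdef
      have hTjw : TJ j w = μ • w - (v : Equiv.Perm (Fin d) → ℂ) := by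
        have h2 : TJ j * TS j k = TS j k * TJ k - 1 :=
          eq_sub_of_add_eq (TS_TJ hjk).symm
        have h3 := congrArg (fun f => f (v : Equiv.Perm (Fin d) → ℂ)) h2
        simp only [Module.End.mul_apply, LinearMap.sub_apply, Module.End.one_apply] at h3
        rw [hwdef, h3, hTkv, _root_.map_smul]
      have hker : LinearMap.ker (TJ j - μ • 1) = ⊥ := by
        rw [← Module.End.eigenspace_def]
        exact not_not.1 (fun h => ha (Module.End.hasEigenvalue_iff.2 h))
      have heq : (TJ j - μ • 1) w
          = (TJ j - μ • 1) ((μ - b)⁻¹ • (v : Equiv.Perm (Fin d) → ℂ)) := by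
        have hμb : μ - b ≠ 0 := sub_ne_zero.2 hne
        simp only [LinearMap.sub_apply, LinearMap.smul_apply, Module.End.one_apply,
          _root_.map_smul, hTjw, hTjv]
        rw [sub_sub_cancel_left, ← sub_smul, smul_smul]
        have : (μ - b)⁻¹ * (b - μ) = -1 := by
          field_simp; ring
        rw [this, neg_one_smul]
      have hwv : w = (μ - b)⁻¹ • (v : Equiv.Perm (Fin d) → ℂ) :=
        LinearMap.ker_eq_bot.1 hker heq
      have hSv : TS j k w = (v : Equiv.Perm (Fin d) → ℂ) := by
        have h := congrArg (fun f => f (v : Equiv.Perm (Fin d) → ℂ)) (TS_sq j k)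
        simpa only [Module.End.mul_apply, Module.End.one_apply, ← hwdef] using h
      have hv2 : (v : Equiv.Perm (Fin d) → ℂ)
          = ((μ - b)⁻¹ * (μ - b)⁻¹) • (v : Equiv.Perm (Fin d) → ℂ) := by
        rw [← smul_smul, ← hwv, ← _root_.map_smul (TS j k), ← hwv, hSv]
      have hsq : (μ - b)⁻¹ * (μ - b)⁻¹ = 1 := by
        by_contra hns
        have h0 := sub_eq_zero.2 hv2.symm
        have h1 : ((μ - b)⁻¹ * (μ - b)⁻¹ - 1) • (v : Equiv.Perm (Fin d) → ℂ) = 0 := by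
          rw [sub_smul, one_smul]; exact h0
        rcases smul_eq_zero.1 h1 with h | h
        · exact hns (sub_eq_zero.1 h)
        · exact hvne h
      have hμb : μ - b ≠ 0 := sub_ne_zero.2 hne
      have hsq2 : (μ - b) * (μ - b) = 1 := by
        field_simp at hsq
        linear_combination -hsq
      have hfac : (μ - b - 1) * (μ - b + 1) = 0 := by linear_combination hsq2
      rcases mul_eq_zero.1 hfac with h | h
      · refine ⟨cb + 1, ?_, by omega⟩
        have : μ = b + 1 := by linear_combination h
        rw [this, hcb]; push_cast; ring
      · refine ⟨cb - 1, ?_, by omega⟩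
        have : μ = b - 1 := by linear_combination h
        rw [this, hcb]; push_cast; ring

end QDM8
section QDM9
open Equiv

variable {d : ℕ}

lemma isUnit_factor (hd : 1 ≤ d) (q : ℂ)
    (hq : ∀ c : ℤ, c ≠ 0 → c.natAbs ≤ d - 1 → (1 : ℂ) + q * (c : ℂ) ≠ 0) (k : Fin d) :
    IsUnit ((1 : Matrix (Equiv.Perm (Fin d)) (Equiv.Perm (Fin d)) ℂ) + q • Jm k) := by
  by_cases hq0 : q = 0
  · simp [hq0]
  by_contra hu
  rw [Matrix.isUnit_iff_isUnit_det, isUnit_iff_ne_zero, not_not] at hu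
  obtain ⟨v, hv0, hv⟩ := Matrix.exists_mulVec_eq_zero_iff.2 hu
  rw [Matrix.add_mulVec, Matrix.one_mulVec, Matrix.smul_mulVec] at hv
  have hev : (Jm k).mulVec v = (-q⁻¹) • v := by
    have h1 : q • (Jm k).mulVec v = -v := by
      rw [eq_comm, neg_eq_iff_add_eq_zero]; rw [add_comm] at hv; rwa [add_comm]
    have := congrArg (fun x => q⁻¹ • x) h1
    simp only [smul_smul, inv_mul_cancel₀ hq0, one_smul] at this
    rw [this, smul_neg, neg_smul]
  have heig : (TJ k).HasEigenvalue (-q⁻¹) := by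
    apply Module.End.hasEigenvalue_of_hasEigenvector (x := v)
    refine ⟨Module.End.mem_eigenspace_iff.2 ?_, hv0⟩
    rw [TJ, Matrix.toLinAlgEquiv'_apply, hev]
  obtain ⟨c, hc, hcle⟩ := TJ_eigenvalue_int (k : ℕ) k rfl _ heig
  have hc0 : c ≠ 0 := by
    intro h
    rw [h] at hc
    simp only [Int.cast_zero, neg_eq_zero, inv_eq_zero] at hc
    exact hq0 hc
  have hcd : c.natAbs ≤ d - 1 := by
    have := k.isLt; omega
  apply hq c hc0 hcd
  have : q * (c : ℂ) = -1 := by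
    rw [← hc]
    field_simp
  rw [this]; ring

lemma isUnit_PP (hd : 1 ≤ d) (q : ℂ)
    (hq : ∀ c : ℤ, c ≠ 0 → c.natAbs ≤ d - 1 → (1 : ℂ) + q * (c : ℂ) ≠ 0) (m : ℕ) :
    IsUnit (PP d q m) := by
  induction m with
  | zero => rw [PP]; exact isUnit_one
  | succ m ih =>
    rw [PP]
    refine ih.mul ?_
    by_cases h : m < d
    · rw [dif_pos h]; exact isUnit_factor hd q hq ⟨m, h⟩
    · rw [dif_neg h]; exact isUnit_one

end QDM9

/-- The `q`-distance matrix `[q^{d - c(ρ⁻¹σ)}]` of the Cayley graph of `S(d)`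
with respect to the class of all transpositions. -/
noncomputable def qDistanceMatrix (d : ℕ) (q : ℂ) :
    Matrix (Equiv.Perm (Fin d)) (Equiv.Perm (Fin d)) ℂ :=
  Matrix.of fun ρ σ => q ^ (d - cycleCount (ρ⁻¹ * σ))

lemma PP_d_eq {d : ℕ} (q : ℂ) : PP d q d = qDistanceMatrix d q := by
  have hstab : stab d d = Finset.univ := by
    ext π
    simp only [mem_stab, Finset.mem_univ, iff_true]
    intro j hj
    exact absurd j.isLt (by omega)
  rw [PP_eq q d (le_refl d), hstab]
  ext ρ σ
  rw [qDistanceMatrix]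
  simp only [Matrix.sum_apply, Matrix.smul_apply, Pm, Matrix.of_apply, smul_eq_mul]
  rw [Finset.sum_eq_single (ρ⁻¹ * σ)]
  · simp
  · intro π _ hπ
    have : ¬ σ = ρ * π := by
      intro h
      exact hπ (by rw [h]; group)
    rw [if_neg this, mul_zero]
  · intro h; exact absurd (Finset.mem_univ _) h


/-- If `1 + qc ≠ 0` for every integer `c` with `1 ≤ |c| ≤ d - 1`, then the
matrix `[q^{d-c(ρ⁻¹σ)}]` is invertible. -/
theorem qDistanceMatrix_invertible (d : ℕ) (hd : 1 ≤ d) (q : ℂ)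
    (hq : ∀ c : ℤ, c ≠ 0 → c.natAbs ≤ d - 1 → (1 : ℂ) + q * (c : ℂ) ≠ 0) :
    IsUnit (qDistanceMatrix d q) := by
  rw [← PP_d_eq q]
  exact isUnit_PP hd q hq d

end HCIZ
end

section
/- Let s(X) be the formal power series Σ_{n=1}^∞ (2^{n−1}/n)·C(3n−2, n−1)·X^n with rational coefficients, where C(·,·) denotes the binomial coefficient. Then s(X)·(1 − 2·s(X))² = X as formal power series; that is, s is the unique formal power series solution of the functional equation s = X·(1−2s)^{−2}. -/
open MeasureTheory Matrix

namespace HCIZ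

/-- The series `s(X) = ∑_{n≥1} (2^{n-1}/n) C(3n-2, n-1) X^n`. -/
noncomputable def sSeries : PowerSeries ℚ :=
  PowerSeries.mk fun n =>
    if n = 0 then 0 else (2 : ℚ) ^ (n - 1) / n * ((3 * n - 2).choose (n - 1))


section SeriesAux
open PowerSeries Finset


noncomputable def tco : ℕ → ℚ
  | 0 => 0
  | 1 => 1
  | n + 2 =>
      4 * ∑ p ∈ (antidiagonal (n+2)).attach,
        (if h : p.1.1 < n + 2 ∧ p.1.2 < n + 2 then tco p.1.1 * tco p.1.2 else 0)
      - 4 * ∑ p ∈ (antidiagonal (n+2)).attach,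
          ∑ q ∈ (antidiagonal p.1.1).attach,
        (if h : q.1.1 < n + 2 ∧ q.1.2 < n + 2 ∧ p.1.2 < n + 2 then
          tco q.1.1 * tco q.1.2 * tco p.1.2 else 0)

lemma tco_zero : tco 0 = 0 := by rw [tco]
lemma tco_one : tco 1 = 1 := by rw [tco]

noncomputable def T : PowerSeries ℚ := PowerSeries.mk tco

lemma coeff_T (n : ℕ) : (PowerSeries.coeff n) T = tco n := PowerSeries.coeff_mk n _

lemma coeff_T_sq (n : ℕ) :
    (PowerSeries.coeff n) (T ^ 2) = ∑ p ∈ antidiagonal n, tco p.1 * tco p.2 := by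
  rw [sq, PowerSeries.coeff_mul]
  simp [coeff_T]

lemma coeff_T_cube (n : ℕ) :
    (PowerSeries.coeff n) (T ^ 3) =
      ∑ p ∈ antidiagonal n, ∑ q ∈ antidiagonal p.1, tco q.1 * tco q.2 * tco p.2 := by
  rw [pow_succ, PowerSeries.coeff_mul]
  refine Finset.sum_congr rfl fun p hp => ?_
  rw [coeff_T_sq, coeff_T, Finset.sum_mul]

lemma tco_rec (n : ℕ) :
    tco (n + 2) = 4 * (PowerSeries.coeff (n+2)) (T ^ 2)
      - 4 * (PowerSeries.coeff (n+2)) (T ^ 3) := by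
  rw [coeff_T_sq, coeff_T_cube, tco]
  congr 1
  · congr 1
    rw [← Finset.sum_attach (antidiagonal (n+2)) (fun p => tco p.1 * tco p.2)]
    refine Finset.sum_congr rfl fun p _ => ?_
    have hp := Finset.HasAntidiagonal.mem_antidiagonal.mp p.2
    split_ifs with h
    · rfl
    · rcases Nat.lt_or_ge p.1.1 (n+2) with h1 | h1
      · have : p.1.2 = n + 2 := by omega
        have h0 : p.1.1 = 0 := by omega
        rw [h0, tco_zero, zero_mul]
      · have h0 : p.1.2 = 0 := by omega
        rw [h0, tco_zero, mul_zero]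
  · congr 1
    rw [← Finset.sum_attach (antidiagonal (n+2))
      (fun p => ∑ q ∈ antidiagonal p.1, tco q.1 * tco q.2 * tco p.2)]
    refine Finset.sum_congr rfl fun p _ => ?_
    have hp := Finset.HasAntidiagonal.mem_antidiagonal.mp p.2
    rw [← Finset.sum_attach (antidiagonal p.1.1)
      (fun q => tco q.1 * tco q.2 * tco p.1.2)]
    refine Finset.sum_congr rfl fun q _ => ?_
    have hq := Finset.HasAntidiagonal.mem_antidiagonal.mp q.2
    split_ifs with h
    · rfl
    · have h2 : q.1.1 = n + 2 ∨ q.1.2 = n + 2 ∨ p.1.2 = n + 2 := by omega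
      rcases h2 with h2 | h2 | h2
      · have h0 : q.1.2 = 0 := by omega
        rw [h0, tco_zero, mul_zero, zero_mul]
      · have h0 : q.1.1 = 0 := by omega
        rw [h0, tco_zero, zero_mul, zero_mul]
      · have h0 : p.1.1 = 0 := by omega
        have h1 : q.1.1 = 0 := by omega
        rw [h1, tco_zero, zero_mul, zero_mul]

lemma T_alg : T * (1 - 2 * T) ^ 2 = PowerSeries.X := by
  have h4 : (PowerSeries.C 4 : PowerSeries ℚ) = 4 := map_ofNat _ 4
  have expand : T * (1 - 2 * T) ^ 2
      = T - PowerSeries.C 4 * T ^ 2 + PowerSeries.C 4 * T ^ 3 := by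
    rw [h4]; ring
  rw [expand]
  ext n
  rw [map_add, map_sub, PowerSeries.coeff_C_mul, PowerSeries.coeff_C_mul, coeff_T,
    PowerSeries.coeff_X]
  match n with
  | 0 =>
    rw [coeff_T_sq, coeff_T_cube]
    simp [tco_zero]
  | 1 =>
    have h2 : (PowerSeries.coeff 1) (T ^ 2) = 0 := by
      rw [coeff_T_sq]
      refine Finset.sum_eq_zero fun p hp => ?_
      have := Finset.HasAntidiagonal.mem_antidiagonal.mp hp
      rcases Nat.eq_zero_or_pos p.1 with h | h
      · rw [h, tco_zero, zero_mul]
      · have : p.2 = 0 := by omega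
        rw [this, tco_zero, mul_zero]
    have h3 : (PowerSeries.coeff 1) (T ^ 3) = 0 := by
      rw [coeff_T_cube]
      refine Finset.sum_eq_zero fun p hp => ?_
      have hp' := Finset.HasAntidiagonal.mem_antidiagonal.mp hp
      refine Finset.sum_eq_zero fun q hq => ?_
      have hq' := Finset.HasAntidiagonal.mem_antidiagonal.mp hq
      rcases Nat.eq_zero_or_pos q.1 with h | h
      · rw [h, tco_zero, zero_mul, zero_mul]
      · rcases Nat.eq_zero_or_pos q.2 with h' | h'
        · rw [h', tco_zero, mul_zero, zero_mul]
        · have : p.2 = 0 := by omega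
          rw [this, tco_zero, mul_zero]
    rw [h2, h3, tco_one]
    norm_num
  | (n + 2) =>
    rw [tco_rec]
    simp

lemma alg_const_zero (t : PowerSeries ℚ) (h : t * (1 - 2 * t) ^ 2 = PowerSeries.X) :
    PowerSeries.constantCoeff t = 0 := by
  have h0 := congrArg (PowerSeries.constantCoeff) h
  simp only [_root_.map_mul, map_sub, map_pow, _root_.map_one, map_ofNat,
    PowerSeries.constantCoeff_X] at h0
  set c := PowerSeries.constantCoeff t with hc
  have hcase : c = 0 ∨ c = 1/2 := by
    rcases mul_eq_zero.mp h0 with h | h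
    · exact Or.inl h
    · right
      have := pow_eq_zero_iff (n := 2) (by norm_num) |>.mp h
      linarith [this]
  rcases hcase with h1 | h1
  · exact h1
  · exfalso
    set e : PowerSeries ℚ := 2 * t - 1 with he
    have he0 : PowerSeries.constantCoeff e = 0 := by
      rw [he, map_sub, _root_.map_mul, _root_.map_one, map_ofNat, ← hc, h1]; norm_num
    have heq : e ^ 2 + e ^ 3 = 2 * PowerSeries.X := by
      rw [he]; linear_combination 2 * h
    have h1c := congrArg (PowerSeries.coeff 1) heq
    have hsq : PowerSeries.constantCoeff (e ^ 2) = 0 := by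
      rw [map_pow, he0]; norm_num
    rw [map_add, sq, pow_succ, PowerSeries.coeff_one_mul, PowerSeries.coeff_one_mul,
      he0, hsq] at h1c
    rw [show (2 : PowerSeries ℚ) * PowerSeries.X = PowerSeries.X + PowerSeries.X by ring,
      map_add, PowerSeries.coeff_one_X] at h1c
    norm_num at h1c

lemma alg_ode (t : PowerSeries ℚ) (h : t * (1 - 2 * t) ^ 2 = PowerSeries.X) :
    (2 * PowerSeries.X ^ 2 - 27 * PowerSeries.X ^ 3) * (d⁄dX ℚ) ((d⁄dX ℚ) t)
      + (PowerSeries.X - 27 * PowerSeries.X ^ 2) * (d⁄dX ℚ) t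
      + 3 * PowerSeries.X * t = PowerSeries.X := by
  set u := (d⁄dX ℚ) t with hu
  set v := (d⁄dX ℚ) u with hv
  have h4 : (PowerSeries.C 4 : PowerSeries ℚ) = 4 := map_ofNat _ 4
  have h8 : (PowerSeries.C 8 : PowerSeries ℚ) = 8 := map_ofNat _ 8
  have h12 : (PowerSeries.C 12 : PowerSeries ℚ) = 12 := map_ofNat _ 12
  -- first derivative
  have h' : t - PowerSeries.C 4 * t ^ 2 + PowerSeries.C 4 * t ^ 3 = PowerSeries.X := by
    rw [h4]; linear_combination h
  have hD := congrArg (⇑(d⁄dX ℚ)) h'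
  simp only [map_add, map_sub, Derivation.leibniz, Derivation.leibniz_pow,
    PowerSeries.derivative_C, PowerSeries.derivative_X, smul_eq_mul] at hD
  rw [h4] at hD
  have h1 : u * (1 - 8 * t + 12 * t ^ 2) = 1 := by
    rw [hu]; linear_combination hD
  -- second derivative
  have h1' : u * (1 - PowerSeries.C 8 * t + PowerSeries.C 12 * t ^ 2) = 1 := by
    rw [h8, h12]; exact h1
  have hD2 := congrArg (⇑(d⁄dX ℚ)) h1'
  simp only [map_add, map_sub, _root_.map_one, Derivation.leibniz, Derivation.leibniz_pow,
    PowerSeries.derivative_C, smul_eq_mul, Derivation.map_one_eq_zero] at hD2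
  rw [h8, h12] at hD2
  have h2 : v * (1 - 8 * t + 12 * t ^ 2) = (8 - 24 * t) * u ^ 2 := by
    rw [hv, hu]; linear_combination hD2
  -- the combination E
  set w : PowerSeries ℚ := 1 - 8 * t + 12 * t ^ 2 with hw
  set E : PowerSeries ℚ :=
    (2 * PowerSeries.X ^ 2 - 27 * PowerSeries.X ^ 3) * v
      + (PowerSeries.X - 27 * PowerSeries.X ^ 2) * u
      + 3 * PowerSeries.X * t - PowerSeries.X with hE
  have hEw : E * w ^ 3 = 0 := by
    have step1 : E * w ^ 3
        = (2 * PowerSeries.X ^ 2 - 27 * PowerSeries.X ^ 3) * (v * w) * w ^ 2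
          + (PowerSeries.X - 27 * PowerSeries.X ^ 2) * (u * w) * w ^ 2
          + (3 * PowerSeries.X * t - PowerSeries.X) * w ^ 3 := by
      rw [hE]; ring
    rw [step1, h2, h1]
    have step2 : (2 * PowerSeries.X ^ 2 - 27 * PowerSeries.X ^ 3) * ((8 - 24 * t) * u ^ 2) * w ^ 2
        = (2 * PowerSeries.X ^ 2 - 27 * PowerSeries.X ^ 3) * (8 - 24 * t) * (u * w) ^ 2 := by
      ring
    rw [step2, h1]
    rw [← h]
    rw [hw]
    ring
  have hwne : w ≠ 0 := by
    intro hw0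
    have := congrArg (PowerSeries.constantCoeff) hw0
    rw [hw] at this
    simp only [map_add, map_sub, _root_.map_one, _root_.map_mul, map_pow, map_zero] at this
    rw [alg_const_zero t h] at this
    rw [show ((PowerSeries.constantCoeff) 8 : ℚ) = 8 from map_ofNat _ 8,
      show ((PowerSeries.constantCoeff) 12 : ℚ) = 12 from map_ofNat _ 12] at this
    norm_num at this
  have hE0 : E = 0 := by
    rcases mul_eq_zero.mp hEw with h0 | h0
    · exact h0
    · exact absurd (pow_eq_zero_iff (by norm_num) |>.mp h0) hwne
  rw [hE] at hE0
  linear_combination hE0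

lemma alg_rec (t : PowerSeries ℚ) (h : t * (1 - 2 * t) ^ 2 = PowerSeries.X) (m : ℕ) :
    ((m : ℚ) + 1) * (2 * m + 1) * (PowerSeries.coeff (m + 1)) t
      = (27 * (m : ℚ) ^ 2 - 3) * (PowerSeries.coeff m) t
        + (if m = 0 then 1 else 0) := by
  have hODE := alg_ode t h
  set u := (d⁄dX ℚ) t with hu
  set v := (d⁄dX ℚ) u with hv
  have h2C : (PowerSeries.C 2 : PowerSeries ℚ) = 2 := map_ofNat _ 2
  have h27C : (PowerSeries.C 27 : PowerSeries ℚ) = 27 := map_ofNat _ 27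
  have h3C : (PowerSeries.C 3 : PowerSeries ℚ) = 3 := map_ofNat _ 3
  have hG : PowerSeries.X * (PowerSeries.C 2 * (PowerSeries.X * v) + u)
      = PowerSeries.X * (PowerSeries.C 27 * (PowerSeries.X ^ 2 * v)
          + PowerSeries.C 27 * (PowerSeries.X * u) - PowerSeries.C 3 * t)
        + PowerSeries.X := by
    rw [h2C, h27C, h3C]; linear_combination hODE
  have hGm := congrArg (PowerSeries.coeff (m + 1)) hG
  rw [map_add, PowerSeries.coeff_succ_X_mul, PowerSeries.coeff_succ_X_mul] at hGm
  simp only [map_add, map_sub, PowerSeries.coeff_C_mul, PowerSeries.coeff_X] at hGm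
  match m with
  | 0 =>
    have e1 : (PowerSeries.coeff 0) (PowerSeries.X * v) = 0 := by
      rw [PowerSeries.coeff_zero_eq_constantCoeff, _root_.map_mul, PowerSeries.constantCoeff_X,
        zero_mul]
    have e2 : (PowerSeries.coeff 0) (PowerSeries.X ^ 2 * v) = 0 := by
      rw [PowerSeries.coeff_zero_eq_constantCoeff, _root_.map_mul, map_pow,
        PowerSeries.constantCoeff_X]
      norm_num
    have e3 : (PowerSeries.coeff 0) (PowerSeries.X * u) = 0 := by
      rw [PowerSeries.coeff_zero_eq_constantCoeff, _root_.map_mul, PowerSeries.constantCoeff_X,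
        zero_mul]
    rw [e1, e2, e3] at hGm
    rw [hu, PowerSeries.coeff_derivative] at hGm
    norm_num at hGm ⊢
    linear_combination hGm
  | 1 =>
    have e1 : (PowerSeries.coeff 1) (PowerSeries.X * v) = (PowerSeries.coeff 0) v :=
      PowerSeries.coeff_succ_X_mul 0 v
    have e2 : (PowerSeries.coeff 1) (PowerSeries.X ^ 2 * v) = 0 := by
      rw [PowerSeries.coeff_X_pow_mul']
      norm_num
    have e3 : (PowerSeries.coeff 1) (PowerSeries.X * u) = (PowerSeries.coeff 0) u :=
      PowerSeries.coeff_succ_X_mul 0 u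
    rw [e1, e2, e3, hv, hu, PowerSeries.coeff_derivative, PowerSeries.coeff_derivative,
      PowerSeries.coeff_derivative] at hGm
    norm_num at hGm ⊢
    linear_combination hGm
  | (k + 2) =>
    have e1 : (PowerSeries.coeff (k + 2)) (PowerSeries.X * v)
        = (PowerSeries.coeff (k + 1)) v := PowerSeries.coeff_succ_X_mul (k + 1) v
    have e2 : (PowerSeries.coeff (k + 2)) (PowerSeries.X ^ 2 * v)
        = (PowerSeries.coeff k) v := PowerSeries.coeff_X_pow_mul v 2 k
    have e3 : (PowerSeries.coeff (k + 2)) (PowerSeries.X * u)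
        = (PowerSeries.coeff (k + 1)) u := PowerSeries.coeff_succ_X_mul (k + 1) u
    rw [e1, e2, e3] at hGm
    simp only [hv, hu, PowerSeries.coeff_derivative] at hGm
    rw [if_neg (by omega : ¬ (k + 2 + 1 = 1))] at hGm
    rw [if_neg (by omega : ¬ (k + 2 = 0))]
    norm_num at hGm ⊢
    push_cast at hGm ⊢
    linear_combination hGm


lemma srec (m : ℕ) :
    ((m : ℚ) + 1) * (2 * m + 1) * (PowerSeries.coeff (m + 1)) sSeries
      = (27 * (m : ℚ) ^ 2 - 3) * (PowerSeries.coeff m) sSeries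
        + (if m = 0 then 1 else 0) := by
  rw [sSeries, PowerSeries.coeff_mk, PowerSeries.coeff_mk]
  match m with
  | 0 => norm_num
  | (k + 1) =>
    rw [if_neg (by omega : ¬ (k + 1 + 1 = 0)), if_neg (by omega : ¬ (k + 1 = 0)),
      if_neg (by omega : ¬ (k + 1 = 0))]
    rw [show 3 * (k + 1 + 1) - 2 = 3 * k + 4 by omega,
      show k + 1 + 1 - 1 = k + 1 by omega,
      show 3 * (k + 1) - 2 = 3 * k + 1 by omega,
      show k + 1 - 1 = k by omega]
    rw [Nat.cast_choose ℚ (by omega : k + 1 ≤ 3 * k + 4),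
      Nat.cast_choose ℚ (by omega : k ≤ 3 * k + 1)]
    rw [show 3 * k + 4 - (k + 1) = 2 * k + 3 by omega,
      show 3 * k + 1 - k = 2 * k + 1 by omega]
    have f1 : (((3 * k + 4).factorial) : ℚ) = (3 * k + 4) * (3 * k + 3) * (3 * k + 2) * ((3 * k + 1).factorial) := by
      rw [show 3 * k + 4 = (3 * k + 3) + 1 by omega, Nat.factorial_succ,
        show 3 * k + 3 = (3 * k + 2) + 1 by omega, Nat.factorial_succ,
        show 3 * k + 2 = (3 * k + 1) + 1 by omega, Nat.factorial_succ]
      push_cast; ring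
    have f2 : (((2 * k + 3).factorial) : ℚ) = (2 * k + 3) * (2 * k + 2) * ((2 * k + 1).factorial) := by
      rw [show 2 * k + 3 = (2 * k + 2) + 1 by omega, Nat.factorial_succ,
        show 2 * k + 2 = (2 * k + 1) + 1 by omega, Nat.factorial_succ]
      push_cast; ring
    have f3 : (((k + 1).factorial) : ℚ) = (k + 1) * ((k).factorial) := by
      rw [Nat.factorial_succ]; push_cast; ring
    rw [f1, f2, f3]
    have h1 : ((k : ℚ) + 1) ≠ 0 := by positivity
    have h2 : ((k : ℚ) + 1 + 1) ≠ 0 := by positivity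
    have h3 : (((k).factorial) : ℚ) ≠ 0 := by
      exact_mod_cast Nat.cast_ne_zero.mpr (Nat.factorial_ne_zero k)
    have h4 : (((2 * k + 1).factorial) : ℚ) ≠ 0 := by
      exact Nat.cast_ne_zero.mpr (Nat.factorial_ne_zero _)
    have h5 : (((3 * k + 1).factorial) : ℚ) ≠ 0 := by
      exact Nat.cast_ne_zero.mpr (Nat.factorial_ne_zero _)
    push_cast
    rw [pow_succ]
    field_simp
    ring

lemma key_unique (t : PowerSeries ℚ) (h : t * (1 - 2 * t) ^ 2 = PowerSeries.X) :
    t = sSeries := by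
  ext n
  induction n with
  | zero =>
    rw [PowerSeries.coeff_zero_eq_constantCoeff, alg_const_zero t h, sSeries,
      PowerSeries.constantCoeff_mk]
    simp
  | succ m ih =>
    have h1 := alg_rec t h m
    have h2 := srec m
    rw [ih] at h1
    have hne : ((m : ℚ) + 1) * (2 * m + 1) ≠ 0 := by positivity
    exact mul_left_cancel₀ hne (h1.trans h2.symm)

end SeriesAux

/-- `s(X)(1 - 2 s(X))² = X`; moreover `s` is the unique formal power series
solution of this functional equation. -/
theorem sSeries_functional_equation :
    sSeries * (1 - 2 * sSeries) ^ 2 = PowerSeries.X ∧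
    ∀ t : PowerSeries ℚ, t * (1 - 2 * t) ^ 2 = PowerSeries.X → t = sSeries := by
  constructor
  · have e := key_unique T T_alg
    have h := T_alg
    rw [e] at h
    exact h
  · exact key_unique


end HCIZ
end
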